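/- arXiv:math/0305091 — 6 statements merged into one kernel-verified Lean document; each statement's English description precedes it below -/
import Mathlib

section
/- Let g : (t₀,∞) × (0,∞) → ℝ be nondecreasing in the second variable with S := sup_{t>t₀, h,k>0} |g(t,h+k) − g(t+h,k) − g(t,h)| < ∞. Then the limit lim_{h→∞} liminf_{t→∞} g(t,h)/h exists (possibly infinite). Moreover, for every r > 0, liminf_{s→∞} ḡ(s)/s ≥ ḡ(r)/r − S/r, where ḡ(h) = liminf_{t→∞} g(t,h). -/
open Filter Topology

namespace Stmt13Aux

lemma map_shift (h : ℝ) : Filter.map (fun t : ℝ => t + h) atTop = atTop :=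
  Filter.map_atTop_eq_of_gc (fun c => c - h) 0
    (fun _ _ hab => by linarith)
    (fun a c _ => by constructor <;> intro H <;> linarith)
    (fun c _ => by linarith)

noncomputable def addIso (c : ℝ) : EReal ≃o EReal where
  toFun x := x + (c : EReal)
  invFun x := x - (c : EReal)
  left_inv x := EReal.add_sub_cancel_right
  right_inv x := EReal.sub_add_cancel
  map_rel_iff' := by
    intro a b
    exact (EReal.addLECancellable_coe c).add_le_add_iff_right

lemma liminf_add_coe {α : Type*} (f : Filter α) (u : α → EReal) (c : ℝ) :
    liminf (fun x => u x + (c : EReal)) f = liminf u f + (c : EReal) :=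
  ((addIso c).liminf_apply (u := u)).symm

lemma mul_coe_div_cancel {c : ℝ} (hc : 0 < c) (x : EReal) :
    x * (c : EReal) / (c : EReal) = x := by
  rw [mul_comm, ← EReal.mul_div]
  exact EReal.mul_div_cancel (EReal.coe_ne_bot c) (EReal.coe_ne_top c)
    (by exact_mod_cast hc.ne')

noncomputable def mulIso (c : ℝ) (hc : 0 < c) : EReal ≃o EReal where
  toFun x := x * (c : EReal)
  invFun x := x / (c : EReal)
  left_inv x := mul_coe_div_cancel hc x
  right_inv x := EReal.div_mul_cancel (EReal.coe_ne_bot c) (EReal.coe_ne_top c)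
    (by exact_mod_cast hc.ne')
  map_rel_iff' := by
    intro a b
    show a * (c : EReal) ≤ b * (c : EReal) ↔ a ≤ b
    constructor
    · intro hab
      have h2 := EReal.div_le_div_right_of_nonneg
        (le_of_lt (by exact_mod_cast hc : (0 : EReal) < (c : EReal))) hab
      rwa [mul_coe_div_cancel hc, mul_coe_div_cancel hc] at h2
    · intro hab
      exact mul_le_mul_of_nonneg_right hab (by exact_mod_cast hc.le)

lemma liminf_mul_coe {α : Type*} (f : Filter α) (u : α → EReal) {c : ℝ} (hc : 0 < c) :
    liminf (fun x => u x * (c : EReal)) f = liminf u f * (c : EReal) :=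
  ((mulIso c hc).liminf_apply (u := u)).symm

end Stmt13Aux

open Stmt13Aux

theorem stmt13 (t₀ S : ℝ) (g : ℝ → ℝ → ℝ)
    (hmono : ∀ t > t₀, ∀ h₁ h₂ : ℝ, 0 < h₁ → h₁ ≤ h₂ → g t h₁ ≤ g t h₂)
    (hS : ∀ t > t₀, ∀ h > (0 : ℝ), ∀ k > (0 : ℝ),
      |g t (h + k) - g (t + h) k - g t h| ≤ S) :
    (∃ L : EReal, Tendsto (fun h : ℝ =>
        liminf (fun t : ℝ => ((g t h / h : ℝ) : EReal)) atTop) atTop (𝓝 L)) ∧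
      ∀ r > (0 : ℝ),
        liminf (fun s : ℝ =>
            liminf (fun t : ℝ => ((g t s : ℝ) : EReal)) atTop * ((s⁻¹ : ℝ) : EReal)) atTop ≥
          liminf (fun t : ℝ => ((g t r : ℝ) : EReal)) atTop * ((r⁻¹ : ℝ) : EReal) -
            ((S / r : ℝ) : EReal) := by
  set G : ℝ → EReal := fun h => liminf (fun t : ℝ => ((g t h : ℝ) : EReal)) atTop with hG
  -- monotonicity of G
  have hGmono : ∀ h₁ h₂ : ℝ, 0 < h₁ → h₁ ≤ h₂ → G h₁ ≤ G h₂ := by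
    intro h₁ h₂ h0 h12
    refine liminf_le_liminf ?_ (by isBoundedDefault) (by isBoundedDefault)
    filter_upwards [eventually_gt_atTop t₀] with t ht
    exact EReal.coe_le_coe_iff.2 (hmono t ht h₁ h₂ h0 h12)
  -- shift invariance
  have hshift : ∀ h k : ℝ, liminf (fun t : ℝ => ((g (t + h) k : ℝ) : EReal)) atTop = G k := by
    intro h k
    have heq : (fun t : ℝ => ((g (t + h) k : ℝ) : EReal))
        = (fun t : ℝ => ((g t k : ℝ) : EReal)) ∘ (fun t : ℝ => t + h) := rfl
    rw [hG, heq, liminf_comp, map_shift]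
  -- superadditivity up to S
  have hsuper : ∀ h > (0:ℝ), ∀ k > (0:ℝ), G h + G k ≤ G (h + k) + (S : EReal) := by
    intro h hh k hk
    have step0 : G k + G h ≤
        liminf (fun t : ℝ => ((g (t + h) k : ℝ) : EReal) + ((g t h : ℝ) : EReal)) atTop := by
      rw [← hshift h k]
      exact EReal.le_liminf_add
    have step1 : liminf (fun t : ℝ => ((g (t + h) k : ℝ) : EReal) + ((g t h : ℝ) : EReal)) atTop
        ≤ liminf (fun t : ℝ => ((g t (h + k) : ℝ) : EReal) + (S : EReal)) atTop := by
      refine liminf_le_liminf ?_ (by isBoundedDefault) (by isBoundedDefault)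
      filter_upwards [eventually_gt_atTop t₀] with t ht
      have habs := abs_le.1 (hS t ht h hh k hk)
      have hr : g (t + h) k + g t h ≤ g t (h + k) + S := by linarith [habs.1]
      calc ((g (t + h) k : ℝ) : EReal) + ((g t h : ℝ) : EReal)
          = ((g (t + h) k + g t h : ℝ) : EReal) := (EReal.coe_add _ _).symm
        _ ≤ ((g t (h + k) + S : ℝ) : EReal) := EReal.coe_le_coe_iff.2 hr
        _ = ((g t (h + k) : ℝ) : EReal) + (S : EReal) := EReal.coe_add _ _
    calc G h + G k = G k + G h := add_comm _ _
      _ ≤ _ := step0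
      _ ≤ _ := step1
      _ = G (h + k) + (S : EReal) := liminf_add_coe _ _ _
  -- iteration
  have hiter : ∀ r > (0:ℝ), ∀ a : ℝ, G r = (a : EReal) → ∀ n : ℕ,
      ((((n : ℝ) + 1) * a - (n : ℝ) * S : ℝ) : EReal) ≤ G (((n : ℝ) + 1) * r) := by
    intro r hr a ha n
    induction n with
    | zero => simp [ha]
    | succ m IH =>
      have h2 := hsuper (((m : ℝ) + 1) * r) (by positivity) r hr
      have harg : ((m : ℝ) + 1) * r + r = (((m + 1 : ℕ) : ℝ) + 1) * r := by push_cast; ring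
      have hchain : ((((m : ℝ) + 1) * a - (m : ℝ) * S + a : ℝ) : EReal)
          ≤ G ((((m + 1 : ℕ) : ℝ) + 1) * r) + (S : EReal) := by
        calc ((((m : ℝ) + 1) * a - (m : ℝ) * S + a : ℝ) : EReal)
            = ((((m : ℝ) + 1) * a - (m : ℝ) * S : ℝ) : EReal) + (a : EReal) :=
              EReal.coe_add _ _
          _ ≤ G (((m : ℝ) + 1) * r) + G r := add_le_add IH (le_of_eq ha.symm)
          _ ≤ G (((m : ℝ) + 1) * r + r) + (S : EReal) := h2
          _ = G ((((m + 1 : ℕ) : ℝ) + 1) * r) + (S : EReal) := by rw [harg]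
      have hsub : ((((m : ℝ) + 1) * a - (m : ℝ) * S + a : ℝ) : EReal) - (S : EReal)
          ≤ G ((((m + 1 : ℕ) : ℝ) + 1) * r) :=
        (EReal.sub_le_iff_le_add (Or.inl (EReal.coe_ne_bot S))
          (Or.inl (EReal.coe_ne_top S))).2 hchain
      have hcast : ((((m + 1 : ℕ) : ℝ) + 1) * a - ((m + 1 : ℕ) : ℝ) * S : ℝ)
          = (((m : ℝ) + 1) * a - (m : ℝ) * S + a) - S := by push_cast; ring
      rw [hcast, EReal.coe_sub]
      exact hsub
  -- key lower bound on liminf of G s / s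
  have keyLB : ∀ r > (0:ℝ), ∀ a : ℝ, G r = (a : EReal) → ∀ b : ℝ, b < (a - S) / r →
      ∀ᶠ s in (atTop : Filter ℝ), (b : EReal) < G s * ((s⁻¹ : ℝ) : EReal) := by
    intro r hr a ha b hb
    set c : ℝ := a - S with hc
    have hcb : 0 < c / r - b := by linarith
    filter_upwards [eventually_ge_atTop r, eventually_gt_atTop ((|c| + |S|) / (c / r - b)),
      eventually_gt_atTop 0] with s hsr hsb hs0
    have hn1 : 1 ≤ ⌊s / r⌋₊ := Nat.le_floor (by rw [Nat.cast_one]; exact (one_le_div hr).2 hsr)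
    obtain ⟨m, hm⟩ : ∃ m : ℕ, ⌊s / r⌋₊ = m + 1 := ⟨⌊s / r⌋₊ - 1, (Nat.succ_pred_eq_of_pos hn1).symm⟩
    have hnle : ((m : ℝ) + 1) ≤ s / r := by
      have h0 := Nat.floor_le (show (0:ℝ) ≤ s / r by positivity)
      rw [hm] at h0
      push_cast at h0
      linarith
    have hnlt : s / r < (m : ℝ) + 2 := by
      have h0 := Nat.lt_floor_add_one (s / r)
      rw [hm] at h0
      push_cast at h0
      linarith
    have hnrs : ((m : ℝ) + 1) * r ≤ s := (le_div_iff₀ hr).1 hnle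
    have h1 : G (((m : ℝ) + 1) * r) ≤ G s := hGmono _ _ (by positivity) hnrs
    have h2 := hiter r hr a ha m
    have h3 : ((((m : ℝ) + 1) * a - (m : ℝ) * S : ℝ) : EReal) ≤ G s := le_trans h2 h1
    have h4 : (((((m : ℝ) + 1) * a - (m : ℝ) * S) * s⁻¹ : ℝ) : EReal)
        ≤ G s * ((s⁻¹ : ℝ) : EReal) := by
      rw [EReal.coe_mul]
      exact mul_le_mul_of_nonneg_right h3 (by exact_mod_cast inv_nonneg.2 hs0.le)
    refine lt_of_lt_of_le ?_ h4
    rw [EReal.coe_lt_coe_iff]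
    -- real arithmetic
    have hsb' : |c| + |S| < s * (c / r - b) := (div_lt_iff₀ hcb).1 hsb
    have hd0 : 0 ≤ s / r - ((m : ℝ) + 1) := by linarith
    have hd1 : s / r - ((m : ℝ) + 1) < 1 := by linarith
    have hkey : (s / r - ((m : ℝ) + 1)) * c ≤ |c| := by
      rcases le_or_gt 0 c with hcpos | hcneg
      · calc (s / r - ((m : ℝ) + 1)) * c ≤ 1 * c :=
              mul_le_mul_of_nonneg_right hd1.le hcpos
          _ = c := one_mul c
          _ ≤ |c| := le_abs_self c
      · calc (s / r - ((m : ℝ) + 1)) * c ≤ 0 := mul_nonpos_of_nonneg_of_nonpos hd0 hcneg.le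
          _ ≤ |c| := abs_nonneg c
    have hgoal : b * s < (((m : ℝ) + 1) * a - (m : ℝ) * S) := by
      have e1 : (((m : ℝ) + 1) * a - (m : ℝ) * S) = ((m : ℝ) + 1) * c + S := by
        rw [hc]; ring
      have e2 : s * (c / r) = (s / r) * c := by ring
      have hSabs : -|S| ≤ S := neg_abs_le S
      nlinarith [hkey, hsb', hSabs]
    calc b = b * s * s⁻¹ := by field_simp
      _ < (((m : ℝ) + 1) * a - (m : ℝ) * S) * s⁻¹ := by
          exact mul_lt_mul_of_pos_right hgoal (inv_pos.2 hs0)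
  -- main lower bound for the liminf over s
  have part2main : ∀ r > (0:ℝ), ∀ a : ℝ, G r = (a : EReal) →
      (((a - S) / r : ℝ) : EReal) ≤
        liminf (fun s : ℝ => G s * ((s⁻¹ : ℝ) : EReal)) atTop := by
    intro r hr a ha
    rw [le_liminf_iff]
    intro y hy
    obtain ⟨b, hyb, hblt⟩ := EReal.exists_between_coe_real hy
    exact (keyLB r hr a ha b (EReal.coe_lt_coe_iff.1 hblt)).mono fun s hs => hyb.trans hs
  -- Part 2
  have part2 : ∀ r > (0 : ℝ),
      liminf (fun s : ℝ => G s * ((s⁻¹ : ℝ) : EReal)) atTop ≥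
        G r * ((r⁻¹ : ℝ) : EReal) - ((S / r : ℝ) : EReal) := by
    intro r hr
    by_cases hT : ∃ s, 0 < s ∧ G s = ⊤
    · obtain ⟨s₁, hs₁, htop⟩ := hT
      have hev : ∀ᶠ s in (atTop : Filter ℝ), G s * ((s⁻¹ : ℝ) : EReal) = (⊤ : EReal) := by
        filter_upwards [eventually_ge_atTop s₁, eventually_gt_atTop 0] with s h1 h2
        have hGs : G s = ⊤ := top_le_iff.1 (htop ▸ hGmono s₁ s hs₁ h1)
        rw [hGs, EReal.top_mul_coe_of_pos (inv_pos.2 h2)]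
      have : liminf (fun s : ℝ => G s * ((s⁻¹ : ℝ) : EReal)) atTop = (⊤ : EReal) := by
        rw [liminf_congr hev, liminf_const]
      rw [this]
      exact le_top
    · push_neg at hT
      by_cases hB : G r = ⊥
      · rw [hB, EReal.bot_mul_coe_of_pos (inv_pos.2 hr)]
        have : (⊥ : EReal) - ((S / r : ℝ) : EReal) = ⊥ := by
          rw [sub_eq_add_neg, ← EReal.coe_neg, EReal.bot_add]
        rw [this]
        exact bot_le
      · have hnt : G r ≠ ⊤ := fun h => hT r hr h
        have ha : G r = ((G r).toReal : EReal) := (EReal.coe_toReal hnt hB).symm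
        have hmain := part2main r hr (G r).toReal ha
        have hrw : G r * ((r⁻¹ : ℝ) : EReal) - ((S / r : ℝ) : EReal)
            = ((((G r).toReal - S) / r : ℝ) : EReal) := by
          rw [ha, ← EReal.coe_mul, ← EReal.coe_sub]
          congr 1
          field_simp
          rw [EReal.toReal_coe]
        rw [hrw]
        exact hmain
  refine ⟨?_, part2⟩
  -- Part 1
  set F : ℝ → EReal := fun h => liminf (fun t : ℝ => ((g t h / h : ℝ) : EReal)) atTop with hF
  have hFeq : ∀ h > (0:ℝ), F h = G h * ((h⁻¹ : ℝ) : EReal) := by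
    intro h hh
    have heq : (fun t : ℝ => ((g t h / h : ℝ) : EReal))
        = fun t : ℝ => ((g t h : ℝ) : EReal) * ((h⁻¹ : ℝ) : EReal) := by
      funext t
      rw [div_eq_mul_inv, EReal.coe_mul]
    rw [hF]
    simp only [heq]
    rw [liminf_mul_coe _ _ (inv_pos.2 hh)]
  by_cases hT : ∃ s, 0 < s ∧ G s = ⊤
  · refine ⟨⊤, ?_⟩
    obtain ⟨s₁, hs₁, htop⟩ := hT
    have hev : ∀ᶠ h in (atTop : Filter ℝ), F h = (⊤ : EReal) := by
      filter_upwards [eventually_ge_atTop s₁, eventually_gt_atTop 0] with h h1 h2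
      have hGh : G h = ⊤ := top_le_iff.1 (htop ▸ hGmono s₁ h hs₁ h1)
      rw [hFeq h h2, hGh, EReal.top_mul_coe_of_pos (inv_pos.2 h2)]
    exact Tendsto.congr' (EventuallyEq.symm hev) tendsto_const_nhds
  · push_neg at hT
    by_cases hBall : ∀ s, 0 < s → G s = ⊥
    · refine ⟨⊥, ?_⟩
      have hev : ∀ᶠ h in (atTop : Filter ℝ), F h = (⊥ : EReal) := by
        filter_upwards [eventually_gt_atTop 0] with h h2
        rw [hFeq h h2, hBall h h2, EReal.bot_mul_coe_of_pos (inv_pos.2 h2)]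
      exact Tendsto.congr' (EventuallyEq.symm hev) tendsto_const_nhds
    · push_neg at hBall
      obtain ⟨r, hr, hbot⟩ := hBall
      have hnt : G r ≠ ⊤ := fun h => hT r hr h
      have ha : G r = ((G r).toReal : EReal) := (EReal.coe_toReal hnt hbot).symm
      set a : ℝ := (G r).toReal with haa
      set ℓ : EReal := liminf F atTop with hℓ
      have hFev : F =ᶠ[atTop] fun s : ℝ => G s * ((s⁻¹ : ℝ) : EReal) := by
        filter_upwards [eventually_gt_atTop 0] with s hs
        exact hFeq s hs
      have hℓeq : ℓ = liminf (fun s : ℝ => G s * ((s⁻¹ : ℝ) : EReal)) atTop :=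
        liminf_congr hFev
      have hℓlb : (((a - S) / r : ℝ) : EReal) ≤ ℓ := by
        rw [hℓeq]; exact part2main r hr a ha
      have hℓbot : ℓ ≠ ⊥ := (lt_of_lt_of_le (EReal.bot_lt_coe _) hℓlb).ne'
      refine ⟨ℓ, tendsto_of_liminf_eq_limsup rfl ?_⟩
      by_cases hℓtop : ℓ = ⊤
      · have h9 : (⊤ : EReal) ≤ limsup F atTop := by
          rw [← hℓtop, hℓ]
          exact liminf_le_limsup
        exact (top_le_iff.1 h9).trans hℓtop.symm
      · have hl : ℓ = ((ℓ.toReal : ℝ) : EReal) := (EReal.coe_toReal hℓtop hℓbot).symm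
        set l : ℝ := ℓ.toReal with hll
        have hup : ∀ ε : ℝ, 0 < ε → limsup F atTop ≤ ((l + ε : ℝ) : EReal) := by
          intro ε hε
          refine limsup_le_of_le (by isBoundedDefault) ?_
          filter_upwards [eventually_ge_atTop (max r (|S| / ε)), eventually_gt_atTop 0]
            with ρ h1 h2
          have hρr : r ≤ ρ := le_trans (le_max_left _ _) h1
          have hGlb : G r ≤ G ρ := hGmono r ρ hr hρr
          have hGρb : G ρ ≠ ⊥ := by
            intro hcon
            rw [hcon, le_bot_iff] at hGlb
            exact hbot hGlb
          have haρ : G ρ = ((G ρ).toReal : EReal) := (EReal.coe_toReal (hT ρ h2) hGρb).symm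
          set aρ : ℝ := (G ρ).toReal with haρρ
          have hlbρ : (aρ - S) / ρ ≤ l := by
            have h5 : (((aρ - S) / ρ : ℝ) : EReal) ≤ ℓ := by
              rw [hℓeq]; exact part2main ρ h2 aρ haρ
            rw [hl] at h5
            exact_mod_cast h5
          have hFρ : F ρ = ((aρ * ρ⁻¹ : ℝ) : EReal) := by
            rw [hFeq ρ h2, haρ, ← EReal.coe_mul]
          rw [hFρ, EReal.coe_le_coe_iff]
          have hSρ : S / ρ ≤ ε := by
            rw [div_le_iff₀ h2]
            have h6 : |S| / ε ≤ ρ := le_trans (le_max_right _ _) h1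
            have h7 : |S| ≤ ε * ρ := by
              rw [div_le_iff₀ hε] at h6
              linarith [h6]
            linarith [le_abs_self S]
          have heq2 : aρ * ρ⁻¹ = (aρ - S) / ρ + S / ρ := by field_simp; ring
          linarith
        by_contra hcon
        have hlt : ℓ < limsup F atTop :=
          lt_of_le_of_ne liminf_le_limsup (fun h => hcon h.symm)
        obtain ⟨x, hx1, hx2⟩ := EReal.exists_between_coe_real hlt
        have hxl : l < x := by
          rw [hl] at hx1
          exact_mod_cast hx1
        have h8 := hup (x - l) (by linarith)
        rw [show l + (x - l) = x by ring] at h8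
        exact absurd (lt_of_lt_of_le hx2 h8) (lt_irrefl _)
end

section
/- Let g : (t₀,∞) × (0,∞) → ℝ be nondecreasing in the second variable with S := sup_{t>t₀, h,k>0} |g(t,h+k) − g(t+h,k) − g(t,h)| < ∞. Then lim_{t→∞} liminf_{h→∞} g(t,h)/h ≥ lim_{h→∞} liminf_{t→∞} g(t,h)/h and lim_{t→∞} limsup_{h→∞} g(t,h)/h ≤ lim_{h→∞} limsup_{t→∞} g(t,h)/h (where the outer limits on the left can be taken as liminf_{t→∞}, resp. limsup_{t→∞}, if existence of the limit in t is not assumed). -/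
open Filter Topology

private lemma floorTendsto {h : ℝ} (hh : 0 < h) :
    Tendsto (fun H : ℝ => (⌊H / h⌋₊ : ℝ) / H) atTop (𝓝 (1 / h)) := by
  have hlow : Tendsto (fun H : ℝ => 1 / h - 1 / H) atTop (𝓝 (1 / h)) := by
    have := tendsto_const_nhds (x := (1:ℝ)/h) (f := atTop (α := ℝ))
    have h2 : Tendsto (fun H : ℝ => 1 / H) atTop (𝓝 0) := by
      simpa [one_div] using tendsto_inv_atTop_zero (𝕜 := ℝ)
    simpa using this.sub h2
  refine tendsto_of_tendsto_of_tendsto_of_le_of_le' hlow tendsto_const_nhds ?_ ?_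
  · filter_upwards [eventually_ge_atTop (1:ℝ)] with H hH
    have hH0 : (0:ℝ) < H := by linarith
    have h1 : H / h - 1 ≤ (⌊H / h⌋₊ : ℝ) := (Nat.sub_one_lt_floor _).le
    have e : (H / h - 1) / H = 1 / h - 1 / H := by field_simp
    calc 1 / h - 1 / H = (H / h - 1) / H := e.symm
      _ ≤ (⌊H / h⌋₊ : ℝ) / H := by gcongr
  · filter_upwards [eventually_ge_atTop (1:ℝ)] with H hH
    have hH0 : (0:ℝ) < H := by linarith
    have h1 : (⌊H / h⌋₊ : ℝ) ≤ H / h := Nat.floor_le (by positivity)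
    have e : (H / h) / H = 1 / h := by field_simp
    calc (⌊H / h⌋₊ : ℝ) / H ≤ (H / h) / H := by gcongr
      _ = 1 / h := e

private lemma floorTendsto' {h : ℝ} (hh : 0 < h) :
    Tendsto (fun H : ℝ => ((⌊H / h⌋₊ : ℝ) + 1) / H) atTop (𝓝 (1 / h)) := by
  have hhi : Tendsto (fun H : ℝ => 1 / h + 1 / H) atTop (𝓝 (1 / h)) := by
    have h2 : Tendsto (fun H : ℝ => 1 / H) atTop (𝓝 0) := by
      simpa [one_div] using tendsto_inv_atTop_zero (𝕜 := ℝ)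
    simpa using (tendsto_const_nhds (x := (1:ℝ)/h) (f := atTop (α := ℝ))).add h2
  refine tendsto_of_tendsto_of_tendsto_of_le_of_le' tendsto_const_nhds hhi ?_ ?_
  · filter_upwards [eventually_ge_atTop (1:ℝ)] with H hH
    have hH0 : (0:ℝ) < H := by linarith
    have h1 : H / h ≤ (⌊H / h⌋₊ : ℝ) + 1 := (Nat.lt_floor_add_one _).le
    have e : (H / h) / H = 1 / h := by field_simp
    calc (1:ℝ) / h = (H / h) / H := e.symm
      _ ≤ ((⌊H / h⌋₊ : ℝ) + 1) / H := by gcongr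
  · filter_upwards [eventually_ge_atTop (1:ℝ)] with H hH
    have hH0 : (0:ℝ) < H := by linarith
    have h1 : (⌊H / h⌋₊ : ℝ) + 1 ≤ H / h + 1 := by
      have := Nat.floor_le (R := ℝ) (a := H / h) (by positivity)
      linarith
    have e : (H / h + 1) / H = 1 / h + 1 / H := by field_simp
    calc ((⌊H / h⌋₊ : ℝ) + 1) / H ≤ (H / h + 1) / H := by gcongr
      _ = 1 / h + 1 / H := e

section iter
variable (t₀ S : ℝ) (g : ℝ → ℝ → ℝ)
    (hmono : ∀ t > t₀, ∀ h₁ h₂ : ℝ, 0 < h₁ → h₁ ≤ h₂ → g t h₁ ≤ g t h₂)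
    (hS : ∀ t > t₀, ∀ h > (0 : ℝ), ∀ k > (0 : ℝ),
      |g t (h + k) - g (t + h) k - g t h| ≤ S)

include hS in
private lemma iterL (hS0 : 0 ≤ S) {h : ℝ} (c : ℝ) (hh : 0 < h) :
    ∀ n : ℕ, ∀ t, t₀ < t → (∀ s, t ≤ s → c ≤ g s h) →
      ((n : ℝ) + 1) * (c - S) ≤ g t (((n : ℝ) + 1) * h) := by
  intro n
  induction n with
  | zero =>
    intro t ht hc
    have := hc t le_rfl
    simp only [Nat.cast_zero, zero_add, one_mul]
    linarith
  | succ n ih =>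
    intro t ht hc
    have h1 : (0:ℝ) < ((n:ℝ) + 1) * h := by positivity
    have key := abs_le.1 (hS t ht h hh (((n:ℝ)+1)*h) h1)
    have ihh := ih (t + h) (by linarith) (fun s hs => hc s (by linarith))
    have hct : c ≤ g t h := hc t le_rfl
    push_cast
    have harg : ((n:ℝ) + 1 + 1) * h = h + ((n:ℝ)+1) * h := by ring
    rw [harg]
    have expand : ((n:ℝ) + 1 + 1) * (c - S) = ((n:ℝ)+1) * (c - S) + (c - S) := by ring
    linarith [key.1]

include hS in
private lemma iterU (hS0 : 0 ≤ S) {h : ℝ} (C : ℝ) (hh : 0 < h) :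
    ∀ n : ℕ, ∀ t, t₀ < t → (∀ s, t ≤ s → g s h ≤ C) →
      g t (((n : ℝ) + 1) * h) ≤ ((n : ℝ) + 1) * (C + S) := by
  intro n
  induction n with
  | zero =>
    intro t ht hc
    have := hc t le_rfl
    simp only [Nat.cast_zero, zero_add, one_mul]
    linarith
  | succ n ih =>
    intro t ht hc
    have h1 : (0:ℝ) < ((n:ℝ) + 1) * h := by positivity
    have key := abs_le.1 (hS t ht h hh (((n:ℝ)+1)*h) h1)
    have ihh := ih (t + h) (by linarith) (fun s hs => hc s (by linarith))
    have hct : g t h ≤ C := hc t le_rfl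
    push_cast
    have harg : ((n:ℝ) + 1 + 1) * h = h + ((n:ℝ)+1) * h := by ring
    rw [harg]
    have expand : ((n:ℝ) + 1 + 1) * (C + S) = ((n:ℝ)+1) * (C + S) + (C + S) := by ring
    linarith [key.2]

include hmono hS in
private lemma stepL (hS0 : 0 ≤ S) {t h : ℝ} (c : ℝ) (ht : t₀ < t) (hh : 0 < h)
    (hc : ∀ s, t ≤ s → c ≤ g s h) :
    (((c - S) / h : ℝ) : EReal) ≤ liminf (fun H : ℝ => ((g t H / H : ℝ) : EReal)) atTop := by
  have htend : Tendsto (fun H : ℝ => ((c - S) * ((⌊H / h⌋₊ : ℝ) / H) : ℝ)) atTop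
      (𝓝 ((c - S) / h)) := by
    have := (floorTendsto hh).const_mul (c - S)
    simpa [mul_one_div, div_eq_mul_inv] using this
  have htendE := EReal.tendsto_coe.2 htend
  have hlim := htendE.liminf_eq
  rw [← hlim]
  refine liminf_le_liminf ?_ (hu := by isBoundedDefault) (hv := by isBoundedDefault)
  filter_upwards [eventually_ge_atTop h, eventually_ge_atTop (1:ℝ)] with H hHh hH1
  have hH0 : (0:ℝ) < H := by linarith
  rw [EReal.coe_le_coe_iff]
  have hn1 : 1 ≤ ⌊H / h⌋₊ := Nat.le_floor (by push_cast; rw [le_div_iff₀ hh]; linarith)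
  have hnh : (⌊H / h⌋₊ : ℝ) * h ≤ H := by
    have := Nat.floor_le (R := ℝ) (a := H / h) (by positivity)
    rw [← le_div_iff₀ hh]; exact this
  obtain ⟨m, hm⟩ : ∃ m : ℕ, ⌊H / h⌋₊ = m + 1 := ⟨_, (Nat.succ_pred_eq_of_pos hn1).symm⟩
  have hmr : (⌊H / h⌋₊ : ℝ) = (m : ℝ) + 1 := by rw [hm]; push_cast; ring
  rw [hmr] at hnh ⊢
  have hiter := iterL t₀ S g hS hS0 c hh m t ht hc
  have hmon : g t (((m:ℝ) + 1) * h) ≤ g t H :=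
    hmono t ht _ H (by positivity) (by linarith)
  have hnum : ((m:ℝ) + 1) * (c - S) ≤ g t H := le_trans hiter hmon
  have e : (c - S) * (((m:ℝ) + 1) / H) = (((m:ℝ) + 1) * (c - S)) / H := by ring
  rw [e]
  gcongr

include hmono hS in
private lemma stepU (hS0 : 0 ≤ S) {t h : ℝ} (C : ℝ) (ht : t₀ < t) (hh : 0 < h)
    (hc : ∀ s, t ≤ s → g s h ≤ C) :
    limsup (fun H : ℝ => ((g t H / H : ℝ) : EReal)) atTop ≤ (((C + S) / h : ℝ) : EReal) := by
  have htend : Tendsto (fun H : ℝ => ((C + S) * (((⌊H / h⌋₊ : ℝ) + 1) / H) : ℝ)) atTop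
      (𝓝 ((C + S) / h)) := by
    have := (floorTendsto' hh).const_mul (C + S)
    simpa [mul_one_div, div_eq_mul_inv] using this
  have htendE := EReal.tendsto_coe.2 htend
  have hlim := htendE.limsup_eq
  rw [← hlim]
  refine limsup_le_limsup ?_ (hu := by isBoundedDefault) (hv := by isBoundedDefault)
  filter_upwards [eventually_ge_atTop h, eventually_ge_atTop (1:ℝ)] with H hHh hH1
  have hH0 : (0:ℝ) < H := by linarith
  rw [EReal.coe_le_coe_iff]
  have hnh : H ≤ ((⌊H / h⌋₊ : ℝ) + 1) * h := by
    have := (Nat.lt_floor_add_one (H / h)).le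
    rw [← div_le_iff₀ hh]; exact this
  have hiter := iterU t₀ S g hS hS0 C hh ⌊H / h⌋₊ t ht hc
  have hmon : g t H ≤ g t (((⌊H / h⌋₊:ℝ) + 1) * h) := hmono t ht H _ hH0 hnh
  have hnum : g t H ≤ ((⌊H / h⌋₊:ℝ) + 1) * (C + S) := le_trans hmon hiter
  have e : (C + S) * (((⌊H / h⌋₊:ℝ) + 1) / H) = (((⌊H / h⌋₊:ℝ) + 1) * (C + S)) / H := by ring
  rw [e]
  gcongr

end iter

theorem stmt14 (t₀ S : ℝ) (g : ℝ → ℝ → ℝ)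
    (hmono : ∀ t > t₀, ∀ h₁ h₂ : ℝ, 0 < h₁ → h₁ ≤ h₂ → g t h₁ ≤ g t h₂)
    (hS : ∀ t > t₀, ∀ h > (0 : ℝ), ∀ k > (0 : ℝ),
      |g t (h + k) - g (t + h) k - g t h| ≤ S) :
    liminf (fun t : ℝ => liminf (fun h : ℝ => ((g t h / h : ℝ) : EReal)) atTop) atTop ≥
        liminf (fun h : ℝ => liminf (fun t : ℝ => ((g t h / h : ℝ) : EReal)) atTop) atTop ∧
      limsup (fun t : ℝ => limsup (fun h : ℝ => ((g t h / h : ℝ) : EReal)) atTop) atTop ≤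
        limsup (fun h : ℝ => limsup (fun t : ℝ => ((g t h / h : ℝ) : EReal)) atTop) atTop := by
  have hS0 : 0 ≤ S := le_trans (abs_nonneg _) (hS (t₀ + 1) (by linarith) 1 one_pos 1 one_pos)
  constructor
  · -- liminf part
    rw [ge_iff_le]
    by_contra hcon
    push_neg at hcon
    obtain ⟨y, hy1, hy2⟩ := EReal.exists_between_coe_real hcon
    obtain ⟨z, hz1, hz2⟩ := EReal.exists_between_coe_real hy2
    have hyz : y < z := by exact_mod_cast hz1
    -- find a suitable h
    have hev : ∀ᶠ h : ℝ in atTop,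
        ((z : EReal) < liminf (fun t : ℝ => ((g t h / h : ℝ) : EReal)) atTop) ∧
          0 < h ∧ S / h ≤ z - y := by
      have e1 := eventually_lt_of_lt_liminf hz2
      have e2 : ∀ᶠ h : ℝ in atTop, 0 < h ∧ S / h ≤ z - y := by
        filter_upwards [eventually_ge_atTop (max 1 (S / (z - y)))] with h hh
        have h1 : (1:ℝ) ≤ h := le_trans (le_max_left _ _) hh
        have h2 : S / (z - y) ≤ h := le_trans (le_max_right _ _) hh
        have hh0 : (0:ℝ) < h := by linarith
        refine ⟨hh0, ?_⟩
        rw [div_le_iff₀ hh0]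
        have : S ≤ (z - y) * h := by
          rw [div_le_iff₀ (by linarith : (0:ℝ) < z - y)] at h2
          nlinarith
        linarith [this]
      exact e1.and e2
    obtain ⟨h, hzL, hh0, hSh⟩ := hev.exists
    -- eventually in t, z < g t h / h
    obtain ⟨T, hT⟩ := eventually_atTop.1 (eventually_lt_of_lt_liminf hzL)
    have hbound : ∀ᶠ t : ℝ in atTop,
        (y : EReal) ≤ liminf (fun H : ℝ => ((g t H / H : ℝ) : EReal)) atTop := by
      filter_upwards [eventually_ge_atTop T, eventually_gt_atTop t₀] with t htT htt0
      have hc : ∀ s, t ≤ s → z * h ≤ g s h := by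
        intro s hs
        have := hT s (le_trans htT hs)
        rw [EReal.coe_lt_coe_iff] at this
        have := (lt_div_iff₀ hh0).1 this
        linarith
      have hstep := stepL t₀ S g hmono hS hS0 (z * h) htt0 hh0 hc
      refine le_trans ?_ hstep
      rw [EReal.coe_le_coe_iff, le_div_iff₀ hh0]
      have : S ≤ (z - y) * h := by
        rw [div_le_iff₀ hh0] at hSh; linarith
      nlinarith
    have : (y : EReal) ≤ liminf
        (fun t : ℝ => liminf (fun H : ℝ => ((g t H / H : ℝ) : EReal)) atTop) atTop :=
      le_liminf_of_le (by isBoundedDefault) hbound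
    exact absurd (lt_of_le_of_lt this hy1) (lt_irrefl _)
  · -- limsup part
    by_contra hcon
    push_neg at hcon
    obtain ⟨y, hy1, hy2⟩ := EReal.exists_between_coe_real hcon
    obtain ⟨z, hz1, hz2⟩ := EReal.exists_between_coe_real hy1
    have hyz : z < y := by exact_mod_cast hz2
    have hev : ∀ᶠ h : ℝ in atTop,
        (limsup (fun t : ℝ => ((g t h / h : ℝ) : EReal)) atTop < (z : EReal)) ∧
          0 < h ∧ S / h ≤ y - z := by
      have e1 := eventually_lt_of_limsup_lt hz1
      have e2 : ∀ᶠ h : ℝ in atTop, 0 < h ∧ S / h ≤ y - z := by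
        filter_upwards [eventually_ge_atTop (max 1 (S / (y - z)))] with h hh
        have h1 : (1:ℝ) ≤ h := le_trans (le_max_left _ _) hh
        have h2 : S / (y - z) ≤ h := le_trans (le_max_right _ _) hh
        have hh0 : (0:ℝ) < h := by linarith
        refine ⟨hh0, ?_⟩
        rw [div_le_iff₀ hh0]
        have : S ≤ (y - z) * h := by
          rw [div_le_iff₀ (by linarith : (0:ℝ) < y - z)] at h2
          nlinarith
        linarith [this]
      exact e1.and e2
    obtain ⟨h, hzL, hh0, hSh⟩ := hev.exists
    obtain ⟨T, hT⟩ := eventually_atTop.1 (eventually_lt_of_limsup_lt hzL)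
    have hbound : ∀ᶠ t : ℝ in atTop,
        limsup (fun H : ℝ => ((g t H / H : ℝ) : EReal)) atTop ≤ (y : EReal) := by
      filter_upwards [eventually_ge_atTop T, eventually_gt_atTop t₀] with t htT htt0
      have hc : ∀ s, t ≤ s → g s h ≤ z * h := by
        intro s hs
        have := hT s (le_trans htT hs)
        rw [EReal.coe_lt_coe_iff] at this
        have := (div_lt_iff₀ hh0).1 this
        linarith
      have hstep := stepU t₀ S g hmono hS hS0 (z * h) htt0 hh0 hc
      refine le_trans hstep ?_
      rw [EReal.coe_le_coe_iff, div_le_iff₀ hh0]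
      have : S ≤ (y - z) * h := by
        rw [div_le_iff₀ hh0] at hSh; linarith
      nlinarith
    have : limsup
        (fun t : ℝ => limsup (fun H : ℝ => ((g t H / H : ℝ) : EReal)) atTop) atTop ≤ (y : EReal) :=
      limsup_le_of_le (by isBoundedDefault) hbound
    exact absurd (lt_of_lt_of_le hy2 this) (lt_irrefl _)
end

section
/- Let g : (t₀,∞) × (0,∞) → ℝ be nondecreasing in the second variable with S := sup_{t>t₀,h,k>0} |g(t,h+k) − g(t+h,k) − g(t,h)| < ∞. If limsup_{t→∞} g(t,h₀) = +∞ for some h₀ > 0, then lim_{h→∞} limsup_{t→∞} g(t,h)/h = +∞. Conversely, setting ḡ(h) = limsup_{t→∞} g(t,h), one has ḡ(h) ≥ h · lim_{h'→∞} limsup_{t→∞} g(t,h')/h' − S for every h > 0. -/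
open Filter Topology

private lemma ereal_le_of_forall_real {a b : EReal}
    (h : ∀ ℓ : ℝ, b < (ℓ : EReal) → a ≤ (ℓ : EReal)) : a ≤ b := by
  by_contra hab
  push_neg at hab
  obtain ⟨q, hq1, hq2⟩ := EReal.exists_rat_btwn_of_lt hab
  exact absurd (h q hq1) (not_le.2 hq2)

private lemma iterate_bound {t₀ S : ℝ} {g : ℝ → ℝ → ℝ}
    (hS : ∀ t > t₀, ∀ h > (0 : ℝ), ∀ k > (0 : ℝ),
      |g t (h + k) - g (t + h) k - g t h| ≤ S)
    {h : ℝ} (hh : 0 < h) :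
    ∀ n : ℕ, ∀ t, t > t₀ →
      g t (((n : ℝ) + 1) * h) ≤ (∑ j ∈ Finset.range (n + 1), g (t + (j : ℝ) * h) h)
        + (n : ℝ) * S := by
  intro n
  induction n with
  | zero => intro t ht; simp
  | succ n ih =>
    intro t ht
    have key := hS t ht (((n : ℝ) + 1) * h) (by positivity) h hh
    have h1 : g t (((n : ℝ) + 1) * h + h) - g (t + ((n : ℝ) + 1) * h) h
        - g t (((n : ℝ) + 1) * h) ≤ S := (abs_le.1 key).2
    have h2 := ih t ht
    rw [Finset.sum_range_succ]
    push_cast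
    have e1 : ((n : ℝ) + 1 + 1) * h = ((n : ℝ) + 1) * h + h := by ring
    rw [e1]
    linarith

private lemma numeric_bound {h h' ℓ S : ℝ} {n : ℕ} (hpos : 0 < h)
    (hn1 : (n : ℝ) * h ≤ h') (hn2 : h' ≤ ((n : ℝ) + 1) * h) :
    ((n : ℝ) + 1) * ℓ + (n : ℝ) * S ≤ ((ℓ + S) / h) * h' + (|ℓ| + |ℓ + S|) := by
  have h3 : ℓ ≤ |ℓ| := le_abs_self ℓ
  rcases le_or_gt 0 (ℓ + S) with hs | hs
  · have h1 : (0 : ℝ) ≤ (ℓ + S) / h := div_nonneg hs hpos.le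
    have h2 : ((ℓ + S) / h) * ((n : ℝ) * h) ≤ ((ℓ + S) / h) * h' :=
      mul_le_mul_of_nonneg_left hn1 h1
    have e : ((ℓ + S) / h) * ((n : ℝ) * h) = (n : ℝ) * (ℓ + S) := by
      field_simp
    rw [e] at h2
    have h4 : (0 : ℝ) ≤ |ℓ + S| := abs_nonneg _
    linarith
  · have h1 : (ℓ + S) / h ≤ 0 := div_nonpos_of_nonpos_of_nonneg hs.le hpos.le
    have h2 : ((ℓ + S) / h) * (((n : ℝ) + 1) * h) ≤ ((ℓ + S) / h) * h' :=
      mul_le_mul_of_nonpos_left hn2 h1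
    have e : ((ℓ + S) / h) * (((n : ℝ) + 1) * h) = (n : ℝ) * (ℓ + S) + (ℓ + S) := by
      field_simp
    rw [e] at h2
    have h5 : -(ℓ + S) ≤ |ℓ + S| := neg_le_abs _
    linarith

theorem stmt15 (t₀ S : ℝ) (g : ℝ → ℝ → ℝ)
    (hmono : ∀ t > t₀, ∀ h₁ h₂ : ℝ, 0 < h₁ → h₁ ≤ h₂ → g t h₁ ≤ g t h₂)
    (hS : ∀ t > t₀, ∀ h > (0 : ℝ), ∀ k > (0 : ℝ),
      |g t (h + k) - g (t + h) k - g t h| ≤ S) :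
    ((∃ h₀ > (0 : ℝ), limsup (fun t : ℝ => ((g t h₀ : ℝ) : EReal)) atTop = ⊤) →
        limsup (fun h : ℝ => limsup (fun t : ℝ => ((g t h / h : ℝ) : EReal)) atTop) atTop = ⊤) ∧
      ∀ h > (0 : ℝ),
        limsup (fun t : ℝ => ((g t h : ℝ) : EReal)) atTop ≥
          ((h : ℝ) : EReal) *
              limsup (fun h' : ℝ => limsup (fun t : ℝ => ((g t h' / h' : ℝ) : EReal)) atTop)
                atTop -
            ((S : ℝ) : EReal) := by
  constructor
  · -- Part 1
    rintro ⟨h₀, hh₀, htop⟩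
    have hFtop : ∀ h : ℝ, max h₀ 1 ≤ h →
        limsup (fun t : ℝ => ((g t h / h : ℝ) : EReal)) atTop = ⊤ := by
      intro h hh
      have hhpos : (0 : ℝ) < h := lt_of_lt_of_le one_pos ((le_max_right _ _).trans hh)
      have hh₀h : h₀ ≤ h := (le_max_left _ _).trans hh
      by_contra hne
      have hlt : limsup (fun t : ℝ => ((g t h / h : ℝ) : EReal)) atTop < ⊤ :=
        lt_of_le_of_ne le_top hne
      obtain ⟨q, hq1, -⟩ := EReal.exists_rat_btwn_of_lt hlt
      set c : ℝ := (q : ℝ)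
      have hev : ∀ᶠ t in atTop, ((g t h / h : ℝ) : EReal) < (c : EReal) :=
        eventually_lt_of_limsup_lt hq1
      have hfr : ∃ᶠ t in atTop, ((c * h : ℝ) : EReal) < ((g t h₀ : ℝ) : EReal) := by
        refine frequently_lt_of_lt_limsup (by isBoundedDefault) ?_
        rw [htop]
        exact EReal.coe_lt_top _
      obtain ⟨t, h1, h2, h3⟩ :=
        (hfr.and_eventually ((eventually_gt_atTop t₀).and hev)).exists
      have h1' : c * h < g t h₀ := EReal.coe_lt_coe_iff.1 h1
      have h3' : g t h / h < c := EReal.coe_lt_coe_iff.1 h3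
      have hm : g t h₀ ≤ g t h := hmono t h2 h₀ h hh₀ hh₀h
      have : c < g t h / h := (lt_div_iff₀ hhpos).2 (lt_of_lt_of_le h1' hm)
      linarith
    have hevF : ∀ᶠ h in atTop,
        limsup (fun t : ℝ => ((g t h / h : ℝ) : EReal)) atTop = (⊤ : EReal) :=
      eventually_atTop.2 ⟨max h₀ 1, hFtop⟩
    calc limsup (fun h : ℝ => limsup (fun t : ℝ => ((g t h / h : ℝ) : EReal)) atTop) atTop
        = limsup (fun _ : ℝ => (⊤ : EReal)) atTop := limsup_congr hevF
      _ = ⊤ := limsup_const _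
  · -- Part 2
    intro h hh
    set M := limsup (fun h' : ℝ =>
      limsup (fun t : ℝ => ((g t h' / h' : ℝ) : EReal)) atTop) atTop with hMdef
    set L := limsup (fun t : ℝ => ((g t h : ℝ) : EReal)) atTop with hLdef
    rw [ge_iff_le]
    apply ereal_le_of_forall_real
    intro ℓ hℓ
    set C : ℝ := |ℓ| + |ℓ + S| with hCdef
    -- eventual bound in t
    have hev : ∀ᶠ t in atTop, g t h < ℓ ∧ t > t₀ := by
      have h1 : ∀ᶠ t in atTop, ((g t h : ℝ) : EReal) < (ℓ : EReal) :=
        eventually_lt_of_limsup_lt hℓ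
      exact (h1.mono fun t ht => EReal.coe_lt_coe_iff.1 ht).and (eventually_gt_atTop t₀)
    obtain ⟨T, hT⟩ := eventually_atTop.1 hev
    -- eventual bound on inner limsups
    have hFb : ∀ᶠ h' in atTop,
        limsup (fun t : ℝ => ((g t h' / h' : ℝ) : EReal)) atTop
          ≤ (((ℓ + S) / h + C / h' : ℝ) : EReal) := by
      refine eventually_atTop.2 ⟨max h 1, fun h' hh' => ?_⟩
      have h'pos : (0 : ℝ) < h' := lt_of_lt_of_le one_pos ((le_max_right _ _).trans hh')
      have hhh' : h ≤ h' := (le_max_left _ _).trans hh'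
      have hxpos : (0 : ℝ) < h' / h := div_pos h'pos hh
      set n : ℕ := ⌈h' / h⌉₊ - 1 with hndef
      have hN1 : 1 ≤ ⌈h' / h⌉₊ := Nat.one_le_ceil_iff.2 hxpos
      have hn : n + 1 = ⌈h' / h⌉₊ := Nat.succ_pred_eq_of_pos hN1
      have hn2 : h' ≤ ((n : ℝ) + 1) * h := by
        have hle : h' / h ≤ (⌈h' / h⌉₊ : ℝ) := Nat.le_ceil _
        have : ((n : ℝ) + 1) = (⌈h' / h⌉₊ : ℝ) := by exact_mod_cast congrArg Nat.cast hn
        rw [this]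
        calc h' = (h' / h) * h := by field_simp
          _ ≤ (⌈h' / h⌉₊ : ℝ) * h := by apply mul_le_mul_of_nonneg_right hle hh.le
      have hn1 : (n : ℝ) * h ≤ h' := by
        have hlt : (⌈h' / h⌉₊ : ℝ) < h' / h + 1 := Nat.ceil_lt_add_one hxpos.le
        have hc : ((n : ℝ) + 1) = (⌈h' / h⌉₊ : ℝ) := by exact_mod_cast congrArg Nat.cast hn
        have : (n : ℝ) < h' / h := by linarith [hc ▸ hlt]
        calc (n : ℝ) * h ≤ (h' / h) * h := mul_le_mul_of_nonneg_right this.le hh.le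
          _ = h' := by field_simp
      have hbound : ∀ t ≥ T, g t h' / h' ≤ (ℓ + S) / h + C / h' := by
        intro t ht'
        have htt₀ : t > t₀ := (hT t ht').2
        have hmon : g t h' ≤ g t (((n : ℝ) + 1) * h) :=
          hmono t htt₀ h' (((n : ℝ) + 1) * h) h'pos hn2
        have hiter := iterate_bound hS hh n t htt₀
        have hsum : (∑ j ∈ Finset.range (n + 1), g (t + (j : ℝ) * h) h)
            ≤ ((n : ℝ) + 1) * ℓ := by
          have hterm : ∀ j ∈ Finset.range (n + 1), g (t + (j : ℝ) * h) h ≤ ℓ := by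
            intro j _
            have : T ≤ t + (j : ℝ) * h :=
              le_trans ht' (le_add_of_nonneg_right (by positivity))
            exact (hT _ this).1.le
          calc (∑ j ∈ Finset.range (n + 1), g (t + (j : ℝ) * h) h)
              ≤ ∑ _j ∈ Finset.range (n + 1), ℓ := Finset.sum_le_sum hterm
            _ = ((n : ℝ) + 1) * ℓ := by
                rw [Finset.sum_const, Finset.card_range, nsmul_eq_mul]
                push_cast; ring
        have hnum := numeric_bound (ℓ := ℓ) (S := S) hh hn1 hn2
        have hfinal : g t h' ≤ ((ℓ + S) / h) * h' + C := by
          rw [hCdef]; linarith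
        calc g t h' / h' ≤ (((ℓ + S) / h) * h' + C) / h' := by
              apply div_le_div_of_nonneg_right hfinal h'pos.le
          _ = (ℓ + S) / h + C / h' := by
              rw [add_div, mul_div_assoc, div_self (ne_of_gt h'pos), mul_one]
      refine limsup_le_of_le (by isBoundedDefault) (eventually_atTop.2 ⟨T, fun t ht => ?_⟩)
      exact EReal.coe_le_coe_iff.2 (hbound t ht)
    -- M ≤ (ℓ+S)/h
    have hM1 : M ≤ limsup (fun h' : ℝ => (((ℓ + S) / h + C / h' : ℝ) : EReal)) atTop :=
      limsup_le_limsup hFb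
    have htend : Tendsto (fun h' : ℝ => (ℓ + S) / h + C / h') atTop (𝓝 ((ℓ + S) / h)) := by
      have h0 : Tendsto (fun h' : ℝ => C / h') atTop (𝓝 0) :=
        tendsto_const_nhds.div_atTop tendsto_id
      simpa using tendsto_const_nhds.add h0
    have hM2 : limsup (fun h' : ℝ => (((ℓ + S) / h + C / h' : ℝ) : EReal)) atTop
        = (((ℓ + S) / h : ℝ) : EReal) :=
      Tendsto.limsup_eq (EReal.tendsto_coe.2 htend)
    have hMle : M ≤ (((ℓ + S) / h : ℝ) : EReal) := hM1.trans_eq hM2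
    have hmul : ((h : ℝ) : EReal) * M ≤ ((h : ℝ) : EReal) * (((ℓ + S) / h : ℝ) : EReal) :=
      mul_le_mul_of_nonneg_left hMle (by exact_mod_cast hh.le)
    have heq : ((h : ℝ) : EReal) * (((ℓ + S) / h : ℝ) : EReal) = ((ℓ + S : ℝ) : EReal) := by
      rw [← EReal.coe_mul]
      congr 1
      field_simp
    calc ((h : ℝ) : EReal) * M - ((S : ℝ) : EReal)
        ≤ ((h : ℝ) : EReal) * (((ℓ + S) / h : ℝ) : EReal) - ((S : ℝ) : EReal) :=
          EReal.sub_le_sub hmul le_rfl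
      _ = (ℓ : EReal) := by rw [heq, ← EReal.coe_sub]; norm_num
end

section
/- Let g : (t₀,∞) × (0,∞) → ℝ be nondecreasing in the second variable with S := sup_{t>t₀,h,k>0}|g(t,h+k) − g(t+h,k) − g(t,h)| < ∞, and set p(t,h) = g(t,h)/h. For κ > 0 define Ṽ_h^d = {t > 0 : p(t,j) > d for all j ∈ κℕ with j ≤ h}, Ṽ^d = {h ∈ κℕ : sup Ṽ_h^d = +∞}, Ṽ = {d : sup Ṽ^d = +∞}, and analogously V_h^d = {t : p(t,h) > d}, V^d, V without the 'for all j' restriction. Then 0 ≤ sup V − sup Ṽ ≤ 2S/κ. -/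
open Filter Topology

private lemma stmt17_ereal_tri (x : EReal) : x = ⊥ ∨ x = ⊤ ∨ ∃ r : ℝ, x = r := by
  induction x using EReal.rec with
  | bot => exact Or.inl rfl
  | coe r => exact Or.inr (Or.inr ⟨r, rfl⟩)
  | top => exact Or.inr (Or.inl rfl)

set_option maxHeartbeats 4000000 in
private lemma stmt17_core (t₀ S : ℝ) (g : ℝ → ℝ → ℝ)
    (hmono : ∀ t > t₀, ∀ h₁ h₂ : ℝ, 0 < h₁ → h₁ ≤ h₂ → g t h₁ ≤ g t h₂)
    (hS : ∀ t > t₀, ∀ h > (0 : ℝ), ∀ k > (0 : ℝ),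
      |g t (h + k) - g (t + h) k - g t h| ≤ S)
    (κ : ℝ) (hκ : 0 < κ)
    (p : ℝ → ℝ → ℝ) (hp : ∀ t h, p t h = g t h / h)
    (d ε : ℝ) (hε : 0 < ε)
    (hd : ¬ BddAbove {h : ℝ | (∃ n : ℕ, 0 < n ∧ h = κ * n) ∧
        ¬ BddAbove {t : ℝ | 0 < t ∧ d < p t h}}) :
    ¬ BddAbove {h : ℝ | (∃ n : ℕ, 0 < n ∧ h = κ * n) ∧
        ¬ BddAbove {t : ℝ | 0 < t ∧
          ∀ j : ℝ, (∃ m : ℕ, 0 < m ∧ j = κ * m) → j ≤ h →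
            d - 2 * S / κ - ε < p t j}} := by
  have hS0 : 0 ≤ S := le_trans (abs_nonneg _) (hS (t₀+1) (by linarith) 1 one_pos 1 one_pos)
  set d' : ℝ := d - 2 * S / κ - ε with hd'
  have hd'lt : κ * d' + S = κ * d - S - κ * ε := by
    rw [hd']; field_simp; ring
  rw [not_bddAbove_iff]
  intro x
  -- choose n₀
  obtain ⟨n₀, hn₀1, hn₀x⟩ : ∃ n₀ : ℕ, 1 ≤ n₀ ∧ x < κ * n₀ := by
    refine ⟨max 1 (⌈x / κ⌉₊ + 1), le_max_left _ _, ?_⟩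
    have h1 : x / κ < ((⌈x / κ⌉₊ + 1 : ℕ) : ℝ) := by
      push_cast
      exact lt_of_le_of_lt (Nat.le_ceil _) (by linarith)
    have h2 : ((⌈x / κ⌉₊ + 1 : ℕ) : ℝ) ≤ ((max 1 (⌈x / κ⌉₊ + 1) : ℕ) : ℝ) := by
      exact_mod_cast Nat.le_max_right 1 _
    calc x = κ * (x / κ) := by field_simp
    _ < κ * ((⌈x / κ⌉₊ + 1 : ℕ) : ℝ) := by exact (mul_lt_mul_iff_right₀ hκ).mpr h1
    _ ≤ _ := by exact (mul_le_mul_iff_right₀ hκ).mpr h2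
  refine ⟨κ * n₀, ⟨⟨n₀, by omega, rfl⟩, ?_⟩, hn₀x⟩
  intro hbdd
  obtain ⟨T, hT⟩ := hbdd
  set B : ℝ := max (max T t₀) 0 with hB
  have hBT : T ≤ B := le_trans (le_max_left _ _) (le_max_left _ _)
  have hBt₀ : t₀ ≤ B := le_trans (le_max_right _ _) (le_max_left _ _)
  have hB0 : (0:ℝ) ≤ B := le_max_right _ _
  -- every point beyond B has a cheap window of length ≤ n₀
  have hyp : ∀ s : ℝ, B < s → ∃ m : ℕ, 1 ≤ m ∧ m ≤ n₀ ∧ g s (κ * m) ≤ κ * m * d' := by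
    intro s hs
    by_contra hc
    push_neg at hc
    have hmem : s ∈ {t : ℝ | 0 < t ∧
        ∀ j : ℝ, (∃ m : ℕ, 0 < m ∧ j = κ * m) → j ≤ κ * n₀ → d' < p t j} := by
      refine ⟨lt_of_le_of_lt hB0 hs, ?_⟩
      rintro j ⟨m, hm0, rfl⟩ hj
      have hm1 : 1 ≤ m := hm0
      have hmn : m ≤ n₀ := by
        by_contra hmn
        push_neg at hmn
        have h' : (n₀:ℝ) < (m:ℝ) := by exact_mod_cast hmn
        nlinarith
      have hgt := hc m hm1 hmn
      have hκm : (0:ℝ) < κ * m := by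
        have : (1:ℝ) ≤ (m:ℝ) := by exact_mod_cast hm1
        nlinarith
      rw [hp]
      rw [lt_div_iff₀ hκm]
      linarith
    have := hT hmem
    linarith [lt_of_le_of_lt hBT hs]
  -- uniform upper bound on g at grid lengths ≤ n₀, beyond B
  set D : ℝ := κ * n₀ * |d'| with hD
  set X : ℝ := D + S with hX
  have hD0 : 0 ≤ D := by positivity
  have hX0 : 0 ≤ X := by positivity
  have hrec : ∀ L : ℕ, ∀ s : ℝ, B < s → 1 ≤ L → L ≤ n₀ → g s (κ * L) ≤ D + L * X := by
    intro L
    induction L using Nat.strong_induction_on with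
    | _ L ih =>
      intro s hs hL1 hLn
      obtain ⟨m, hm1, hmn, hmle⟩ := hyp s hs
      have hst₀ : t₀ < s := lt_of_le_of_lt hBt₀ hs
      have hm1' : (1:ℝ) ≤ (m:ℝ) := by exact_mod_cast hm1
      have hmn' : (m:ℝ) ≤ (n₀:ℝ) := by exact_mod_cast hmn
      have hgD : g s (κ * m) ≤ D := by
        refine le_trans hmle ?_
        have h00 : (0:ℝ) ≤ κ * m := by nlinarith
        have h1 : κ * ↑m * d' ≤ κ * ↑m * |d'| :=
          mul_le_mul_of_nonneg_left (le_abs_self d') h00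
        have h2 : κ * ↑m * |d'| ≤ κ * ↑n₀ * |d'| := by
          apply mul_le_mul_of_nonneg_right _ (abs_nonneg d')
          nlinarith
        rw [hD]
        linarith
      by_cases hcase : L ≤ m
      · have hmono' : g s (κ * L) ≤ g s (κ * m) := by
          apply hmono s hst₀
          · have : (1:ℝ) ≤ (L:ℝ) := by exact_mod_cast hL1
            nlinarith
          · have : (L:ℝ) ≤ (m:ℝ) := by exact_mod_cast hcase
            nlinarith
        nlinarith [mul_nonneg (show (0:ℝ) ≤ (L:ℝ) by positivity) hX0]
      · push_neg at hcase
        have hLm1 : 1 ≤ L - m := by omega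
        have hLmn : L - m ≤ n₀ := by omega
        have hLmlt : L - m < L := by omega
        have hu : ((L - m : ℕ) : ℝ) = (L:ℝ) - (m:ℝ) := by
          rw [Nat.cast_sub (le_of_lt hcase)]
        have hL' : (1:ℝ) ≤ (L:ℝ) := by exact_mod_cast hL1
        have hm'L : (m:ℝ) < (L:ℝ) := by exact_mod_cast hcase
        have hsplit : g s (κ * L) ≤ g s (κ * m) + g (s + κ * m) (κ * (L - m : ℕ)) + S := by
          have h1 : (0:ℝ) < κ * m := by nlinarith
          have h2 : (0:ℝ) < κ * ((L - m : ℕ):ℝ) := by rw [hu]; nlinarith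
          have habs := hS s hst₀ (κ * m) h1 (κ * (L - m : ℕ)) h2
          have heq : κ * (m:ℝ) + κ * ((L - m : ℕ):ℝ) = κ * (L:ℝ) := by rw [hu]; ring
          rw [heq] at habs
          have := abs_le.mp habs
          linarith [this.1]
        have hih := ih (L - m) hLmlt (s + κ * m)
          (by nlinarith) hLm1 hLmn
        rw [hu] at hih hsplit
        nlinarith [mul_nonneg (show (0:ℝ) ≤ (m:ℝ) - 1 by linarith) hX0, hX]
  set C : ℝ := D + n₀ * X with hC
  have hC0 : 0 ≤ C := by positivity
  -- choose n large
  have hSκε : (0:ℝ) < S + κ * ε := by nlinarith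
  set R : ℝ := (C + S + κ * n₀ * |d|) / (S + κ * ε) with hR
  have hRmul : R * (S + κ * ε) = C + S + κ * n₀ * |d| :=
    div_mul_cancel₀ _ (ne_of_gt hSκε)
  obtain ⟨h, ⟨⟨n, hn0, rfl⟩, hVn⟩, hhx⟩ :=
    not_bddAbove_iff.mp hd (κ * ((n₀ + 1 + ⌈R⌉₊ : ℕ) : ℝ))
  have hnbig : ((n₀ + 1 + ⌈R⌉₊ : ℕ) : ℝ) < (n:ℝ) := (mul_lt_mul_iff_right₀ hκ).mp hhx
  have hnn₀ : n₀ + 1 ≤ n := by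
    have h1 : ((n₀ + 1 + ⌈R⌉₊ : ℕ) : ℝ) < (n:ℝ) := hnbig
    have : (n₀ + 1 + ⌈R⌉₊ : ℕ) < n := by exact_mod_cast h1
    omega
  -- choose t
  obtain ⟨t, ⟨ht0, htd⟩, htB⟩ := not_bddAbove_iff.mp hVn B
  have htt₀ : t₀ < t := lt_of_le_of_lt hBt₀ htB
  have hn1 : (1:ℝ) ≤ (n:ℝ) := by exact_mod_cast hn0
  have hgtn : κ * (n:ℝ) * d < g t (κ * (n:ℝ)) := by
    rw [hp] at htd
    have hκn : (0:ℝ) < κ * n := by nlinarith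
    rw [lt_div_iff₀ hκn] at htd
    linarith
  -- greedy covering
  have hypN : ∀ i : ℕ, ∃ m : ℕ, 1 ≤ m ∧ m ≤ n₀ ∧ g (t + κ * (i:ℝ)) (κ * (m:ℝ)) ≤ κ * (m:ℝ) * d' := by
    intro i
    apply hyp
    have : (0:ℝ) ≤ κ * (i:ℝ) := by positivity
    linarith
  choose mc hmc1 hmcn hmcle using hypN
  let f : ℕ → ℕ := fun j => Nat.rec (motive := fun _ => ℕ) 0 (fun _ q => q + mc q) j
  have hf0 : f 0 = 0 := rfl
  have hfs : ∀ j, f (j+1) = f j + mc (f j) := fun j => rfl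
  have hfge : ∀ j, j ≤ f j := by
    intro j
    induction j with
    | zero => exact Nat.zero_le _
    | succ j ihj => rw [hfs]; have := hmc1 (f j); omega
  have hprefix : ∀ j, 1 ≤ j → g t (κ * (f j : ℝ)) ≤ (f j : ℝ) * (κ * d' + S) := by
    intro j
    induction j with
    | zero => omega
    | succ j ihj =>
      intro _
      by_cases hj0 : j = 0
      · subst hj0
        have h0 : f (0+1) = mc 0 := by rw [hfs 0, hf0, Nat.zero_add]
        rw [h0]
        have hle := hmcle 0
        simp only [Nat.cast_zero, mul_zero, add_zero] at hle
        have hm1' : (1:ℝ) ≤ (mc 0 : ℝ) := by exact_mod_cast hmc1 0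
        nlinarith
      · have hj1 : 1 ≤ j := by omega
        have hfj1 : 1 ≤ f j := le_trans hj1 (hfge j)
        have hfj1' : (1:ℝ) ≤ (f j : ℝ) := by exact_mod_cast hfj1
        have hib := ihj hj1
        rw [hfs]
        have hcast : ((f j + mc (f j) : ℕ) : ℝ) = (f j : ℝ) + (mc (f j) : ℝ) := by
          push_cast; ring
        have hm1' : (1:ℝ) ≤ (mc (f j) : ℝ) := by exact_mod_cast hmc1 (f j)
        have hsplit : g t (κ * ((f j + mc (f j) : ℕ) : ℝ)) ≤
            g t (κ * (f j : ℝ)) + g (t + κ * (f j : ℝ)) (κ * (mc (f j) : ℝ)) + S := by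
          have h1 : (0:ℝ) < κ * (f j : ℝ) := by nlinarith
          have h2 : (0:ℝ) < κ * (mc (f j) : ℝ) := by nlinarith
          have habs := hS t htt₀ (κ * (f j : ℝ)) h1 (κ * (mc (f j) : ℝ)) h2
          have heq : κ * (f j : ℝ) + κ * (mc (f j) : ℝ) = κ * ((f j + mc (f j) : ℕ) : ℝ) := by
            rw [hcast]; ring
          rw [heq] at habs
          have := abs_le.mp habs
          linarith [this.1]
        have hle := hmcle (f j)
        rw [hcast] at hsplit ⊢
        nlinarith [mul_nonneg (show (0:ℝ) ≤ (mc (f j):ℝ) - 1 by linarith) hS0]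
  -- stopping index
  have hex : ∃ j, n < f j := ⟨n + 1, lt_of_lt_of_le (Nat.lt_succ_self n) (hfge (n+1))⟩
  have hj₁spec : n < f (Nat.find hex) := Nat.find_spec hex
  set j₁ : ℕ := Nat.find hex with hj₁
  have hj₁1 : 1 ≤ j₁ := by
    rcases Nat.eq_zero_or_pos j₁ with h0 | h1
    · exfalso
      have hz : f j₁ = 0 := by rw [h0]; exact hf0
      omega
    · exact h1
  set q : ℕ := f (j₁ - 1) with hq
  have hqle : q ≤ n := by
    have := Nat.find_min hex (show j₁ - 1 < j₁ by omega)
    omega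
  have hqwin : n < q + mc q := by
    have h1 : f (j₁ - 1 + 1) = q + mc q := hfs (j₁ - 1)
    have heq : j₁ - 1 + 1 = j₁ := by omega
    rw [heq] at h1
    omega
  have hqn₀ : n < q + n₀ := lt_of_lt_of_le hqwin (by have := hmcn q; omega)
  have hq1 : 1 ≤ q := by omega
  have hj₁m1 : 1 ≤ j₁ - 1 := by
    by_contra hcon
    have h1 : j₁ - 1 = 0 := by omega
    have h2 : q = 0 := by rw [hq, h1]; exact hf0
    omega
  have hgq : g t (κ * (q:ℝ)) ≤ (q:ℝ) * (κ * d' + S) := hprefix (j₁ - 1) hj₁m1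
  rw [hd'lt] at hgq
  set L : ℕ := n - q with hL
  have hLn₀ : L < n₀ := by omega
  have hqLn : q + L = n := by omega
  have hcastL : (q:ℝ) + (L:ℝ) = (n:ℝ) := by exact_mod_cast hqLn
  rcases Nat.eq_zero_or_pos L with hL0 | hL1
  · -- no tail
    have hqn : q = n := by omega
    rw [hqn] at hgq
    nlinarith [mul_nonneg (show (0:ℝ) ≤ (n:ℝ) by positivity) hS0,
      mul_le_mul_of_nonneg_right hn1 (le_of_lt (mul_pos hκ hε))]
  · have hL1' : (1:ℝ) ≤ (L:ℝ) := by exact_mod_cast hL1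
    have hq1' : (1:ℝ) ≤ (q:ℝ) := by exact_mod_cast hq1
    have hsplit : g t (κ * (n:ℝ)) ≤ g t (κ * (q:ℝ)) + g (t + κ * (q:ℝ)) (κ * (L:ℝ)) + S := by
      have h1 : (0:ℝ) < κ * (q:ℝ) := by nlinarith
      have h2 : (0:ℝ) < κ * (L:ℝ) := by nlinarith
      have habs := hS t htt₀ (κ * (q:ℝ)) h1 (κ * (L:ℝ)) h2
      have heq : κ * (q:ℝ) + κ * (L:ℝ) = κ * (n:ℝ) := by rw [← hcastL]; ring
      rw [heq] at habs
      have := abs_le.mp habs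
      linarith [(abs_le.mp habs).1]
    have htail : g (t + κ * (q:ℝ)) (κ * (L:ℝ)) ≤ C := by
      have h1 := hrec L (t + κ * (q:ℝ))
        (by nlinarith) hL1 (le_of_lt hLn₀)
      have hLn₀' : (L:ℝ) ≤ (n₀:ℝ) := by exact_mod_cast le_of_lt hLn₀
      rw [hC]
      nlinarith
    have hqbig : R < (q:ℝ) := by
      have h1 : (q:ℝ) > (n:ℝ) - (n₀:ℝ) := by
        have : ((n:ℕ):ℝ) < ((q + n₀ : ℕ):ℝ) := by exact_mod_cast hqn₀
        push_cast at this
        linarith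
      have h2 : ((n₀ + 1 + ⌈R⌉₊ : ℕ) : ℝ) = (n₀:ℝ) + 1 + (⌈R⌉₊:ℝ) := by push_cast; ring
      have h3 : R ≤ (⌈R⌉₊:ℝ) := Nat.le_ceil R
      rw [h2] at hnbig
      linarith
    have hLd : -(κ * (L:ℝ) * d) ≤ κ * (n₀:ℝ) * |d| := by
      have h1 : -d ≤ |d| := neg_le_abs d
      have h2 : (L:ℝ) ≤ (n₀:ℝ) := by exact_mod_cast le_of_lt hLn₀
      have h3 : (0:ℝ) ≤ κ * (L:ℝ) := by nlinarith
      have h4 : κ * (L:ℝ) * (-d) ≤ κ * (L:ℝ) * |d| := mul_le_mul_of_nonneg_left h1 h3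
      have h5 : κ * (L:ℝ) * |d| ≤ κ * (n₀:ℝ) * |d| := by
        apply mul_le_mul_of_nonneg_right _ (abs_nonneg d)
        nlinarith
      linarith
    have hgtn' : κ * ((q:ℝ) + (L:ℝ)) * d < g t (κ * (n:ℝ)) := by rw [hcastL]; exact hgtn
    have key : (q:ℝ) * S + (q:ℝ) * (κ * ε) < C + S + κ * (n₀:ℝ) * |d| := by
      linarith [hgtn', hsplit, htail, hgq, hLd]
    have hfin : R * (S + κ * ε) < (q:ℝ) * (S + κ * ε) :=
      mul_lt_mul_of_pos_right hqbig hSκε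
    linarith [key, hfin, hRmul]

theorem stmt17 (t₀ S : ℝ) (g : ℝ → ℝ → ℝ)
    (hmono : ∀ t > t₀, ∀ h₁ h₂ : ℝ, 0 < h₁ → h₁ ≤ h₂ → g t h₁ ≤ g t h₂)
    (hS : ∀ t > t₀, ∀ h > (0 : ℝ), ∀ k > (0 : ℝ),
      |g t (h + k) - g (t + h) k - g t h| ≤ S)
    (κ : ℝ) (hκ : 0 < κ)
    -- `p t h = g t h / h`
    (p : ℝ → ℝ → ℝ) (hp : ∀ t h, p t h = g t h / h)
    -- `sup V` : supremum of the `d` with `V^d` unbounded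
    (supV : EReal)
    (hsupV : supV = sSup ((fun d : ℝ => (d : EReal)) ''
      {d : ℝ | ¬ BddAbove {h : ℝ | (∃ n : ℕ, 0 < n ∧ h = κ * n) ∧
        ¬ BddAbove {t : ℝ | 0 < t ∧ d < p t h}}}))
    -- `sup Ṽ` : supremum of the `d` with `Ṽ^d` unbounded
    (supVt : EReal)
    (hsupVt : supVt = sSup ((fun d : ℝ => (d : EReal)) ''
      {d : ℝ | ¬ BddAbove {h : ℝ | (∃ n : ℕ, 0 < n ∧ h = κ * n) ∧
        ¬ BddAbove {t : ℝ | 0 < t ∧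
          ∀ j : ℝ, (∃ m : ℕ, 0 < m ∧ j = κ * m) → j ≤ h → d < p t j}}})) :
    supVt ≤ supV ∧ supV ≤ supVt + ((2 * S / κ : ℝ) : EReal) := by
  subst hsupV hsupVt
  constructor
  · apply sSup_le_sSup
    apply Set.image_mono
    intro d hd
    simp only [Set.mem_setOf_eq] at hd ⊢
    intro hb
    apply hd
    refine hb.mono ?_
    rintro h ⟨⟨n, hn0, rfl⟩, hun⟩
    refine ⟨⟨n, hn0, rfl⟩, ?_⟩
    intro hb2
    apply hun
    refine hb2.mono ?_
    rintro t ⟨ht0, hall⟩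
    exact ⟨ht0, hall (κ * n) ⟨n, hn0, rfl⟩ le_rfl⟩
  · apply sSup_le
    rintro x ⟨d, hd, rfl⟩
    simp only [Set.mem_setOf_eq] at hd
    have hstep : ∀ ε : ℝ, 0 < ε →
        ((d - 2 * S / κ - ε : ℝ) : EReal) ≤ sSup ((fun d : ℝ => (d : EReal)) ''
          {d : ℝ | ¬ BddAbove {h : ℝ | (∃ n : ℕ, 0 < n ∧ h = κ * n) ∧
            ¬ BddAbove {t : ℝ | 0 < t ∧
              ∀ j : ℝ, (∃ m : ℕ, 0 < m ∧ j = κ * m) → j ≤ h → d < p t j}}}) := by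
      intro ε hε
      exact le_sSup ⟨d - 2 * S / κ - ε,
        stmt17_core t₀ S g hmono hS κ hκ p hp d ε hε hd, rfl⟩
    set y : EReal := sSup ((fun d : ℝ => (d : EReal)) ''
          {d : ℝ | ¬ BddAbove {h : ℝ | (∃ n : ℕ, 0 < n ∧ h = κ * n) ∧
            ¬ BddAbove {t : ℝ | 0 < t ∧
              ∀ j : ℝ, (∃ m : ℕ, 0 < m ∧ j = κ * m) → j ≤ h → d < p t j}}}) with hy
    rcases stmt17_ereal_tri y with hbot | htop | ⟨v, hv⟩
    · exfalso
      have h1 := hstep 1 one_pos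
      rw [hbot] at h1
      exact EReal.coe_ne_bot _ (le_bot_iff.mp h1)
    · rw [htop, EReal.top_add_coe]
      exact le_top
    · rw [hv, ← EReal.coe_add, EReal.coe_le_coe_iff]
      have h2 : ∀ ε : ℝ, 0 < ε → d - 2 * S / κ - ε ≤ v := by
        intro ε hε
        have h3 := hstep ε hε
        rw [hv] at h3
        exact_mod_cast h3
      by_contra hcon
      push_neg at hcon
      have h4 := h2 ((d - (v + 2 * S / κ)) / 2) (by linarith)
      linarith
end

section
/- Let g : (t₀,∞) × (0,∞) → ℝ be nondecreasing in the second variable with S := sup_{t>t₀,h,k>0}|g(t,h+k) − g(t+h,k) − g(t,h)| < ∞. Then: (a) for every sequence t_n → ∞, limsup_{h→∞} limsup_n g(t_n,h)/h ≤ limsup_{h→∞} limsup_{t→∞} g(t,h)/h; (b) for every κ > 0 there exists a sequence t̄_n → ∞ with limsup_{h→∞} limsup_{t→∞} g(t,h)/h ≤ liminf_{h→∞} liminf_n g(t̄_n,h)/h + 2S/κ. -/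
open Filter Topology

lemma aux_gLB (t₀ S : ℝ) (g : ℝ → ℝ → ℝ)
    (hmono : ∀ t > t₀, ∀ h₁ h₂ : ℝ, 0 < h₁ → h₁ ≤ h₂ → g t h₁ ≤ g t h₂)
    (hS : ∀ t > t₀, ∀ h > (0 : ℝ), ∀ k > (0 : ℝ),
      |g t (h + k) - g (t + h) k - g t h| ≤ S) :
    ∀ s, t₀ < s → ∀ k, 0 < k → -S ≤ g s k := by
  intro s hs k hk
  have hc0 : 0 < (s - t₀)/2 := by linarith
  have h1 : t₀ < s - (s - t₀)/2 := by linarith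
  have h2 := hS (s - (s - t₀)/2) h1 ((s - t₀)/2) hc0 k hk
  have h3 : g (s - (s - t₀)/2) ((s - t₀)/2) ≤ g (s - (s - t₀)/2) ((s - t₀)/2 + k) :=
    hmono _ h1 _ _ hc0 (by linarith)
  have h4 : s - (s - t₀)/2 + (s - t₀)/2 = s := by ring
  rw [h4] at h2
  have h5 := (abs_le.1 h2).2
  linarith

lemma aux_key (t₀ S : ℝ) (g : ℝ → ℝ → ℝ)
    (hmono : ∀ t > t₀, ∀ h₁ h₂ : ℝ, 0 < h₁ → h₁ ≤ h₂ → g t h₁ ≤ g t h₂)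
    (hS : ∀ t > t₀, ∀ h > (0 : ℝ), ∀ k > (0 : ℝ),
      |g t (h + k) - g (t + h) k - g t h| ≤ S)
    (hS0 : 0 ≤ S) (κ : ℝ) (hκ : 0 < κ) (B δ : ℝ) (hδ : 0 < δ) (hB : 2*S/κ < B)
    (hBL : ((B + 2*δ : ℝ) : EReal) <
      limsup (fun h : ℝ => limsup (fun s : ℝ => ((g s h / h : ℝ) : EReal)) atTop) atTop)
    (m : ℕ) (R : ℝ) :
    ∃ s : ℝ, R < s ∧ t₀ < s ∧ ∀ q : ℕ, 1 ≤ q → q ≤ m + 1 →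
      (q:ℝ)*κ*(B - S/κ) - S ≤ g s ((q:ℝ)*κ) := by
  set c := B - S/κ with hcdef
  have hSκ : 0 ≤ S/κ := div_nonneg hS0 hκ.le
  have h2Sκ : S/κ ≤ 2*S/κ := by
    have : 2*S/κ = S/κ + S/κ := by ring
    linarith
  have hB0 : 0 < B := lt_of_le_of_lt (by linarith) hB
  have hc0 : 0 ≤ c := by rw [hcdef]; linarith
  have hfreq := Filter.frequently_lt_of_lt_limsup (by isBoundedDefault) hBL
  obtain ⟨h, hh1, hh2⟩ := (hfreq.and_eventually (eventually_ge_atTop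
    (κ * (((m:ℝ)+1) + ((m:ℝ)+1)*c/δ + (B+2*δ)/δ + 2)))).exists
  have t1 : (0:ℝ) ≤ (m:ℝ)+1 := by positivity
  have t2 : (0:ℝ) ≤ ((m:ℝ)+1)*c/δ := div_nonneg (mul_nonneg t1 hc0) hδ.le
  have t3 : (0:ℝ) ≤ (B+2*δ)/δ := div_nonneg (by linarith) hδ.le
  have hhκ : ((m:ℝ)+1) + ((m:ℝ)+1)*c/δ + (B+2*δ)/δ + 2 ≤ h/κ := by
    rw [le_div_iff₀ hκ]
    have : (((m:ℝ)+1) + ((m:ℝ)+1)*c/δ + (B+2*δ)/δ + 2)*κ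
        = κ * (((m:ℝ)+1) + ((m:ℝ)+1)*c/δ + (B+2*δ)/δ + 2) := by ring
    linarith
  have hhpos : 0 < h := by
    have : 0 < κ * (((m:ℝ)+1) + ((m:ℝ)+1)*c/δ + (B+2*δ)/δ + 2) := by
      apply mul_pos hκ; linarith
    linarith
  set M : ℕ := Nat.floor (h/κ) + 1 with hMdef
  have hMr : (M:ℝ) = ((Nat.floor (h/κ) : ℝ)) + 1 := by rw [hMdef]; push_cast; ring
  have hM_lt : h/κ < (M:ℝ) := by rw [hMr]; exact Nat.lt_floor_add_one _
  have hM_ge : (M:ℝ) - 1 ≤ h/κ := by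
    rw [hMr]
    have := Nat.floor_le (show (0:ℝ) ≤ h/κ by positivity)
    linarith
  have hM1 : h < (M:ℝ)*κ := (div_lt_iff₀ hκ).1 hM_lt
  have hM2 : ((M:ℝ)-1)*κ ≤ h := (le_div_iff₀ hκ).1 hM_ge
  have hMm : m + 1 ≤ M := by
    have h' : ((m+1:ℕ):ℝ) < (M:ℝ) := by push_cast; linarith
    exact (Nat.cast_lt.1 h').le
  have e1 : ((m:ℝ)+1)*c/δ ≤ (M:ℝ) := by linarith
  have e2 : ((m:ℝ)+1)*c ≤ (M:ℝ)*δ := by rw [div_le_iff₀ hδ] at e1; linarith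
  have hMc : ((m:ℝ)+1)*κ*c ≤ (M:ℝ)*κ*δ := by
    have := mul_le_mul_of_nonneg_right e2 hκ.le
    have hcm : ((m:ℝ)+1)*c*κ = ((m:ℝ)+1)*κ*c := by ring
    have hcm2 : (M:ℝ)*δ*κ = (M:ℝ)*κ*δ := by ring
    linarith
  have hMB : B + 2*δ ≤ ((M:ℝ)-1)*δ := by
    have e3 : (B+2*δ)/δ ≤ (M:ℝ) - 1 := by linarith
    rw [div_le_iff₀ hδ] at e3; linarith
  have hfreq2 : ∃ᶠ s in atTop, ((B + 2*δ:ℝ):EReal) < ((g s h / h : ℝ):EReal) :=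
    Filter.frequently_lt_of_lt_limsup (by isBoundedDefault) hh1
  obtain ⟨s, hs1, hs2⟩ := (hfreq2.and_eventually (eventually_gt_atTop (max R t₀))).exists
  have hsR : R < s := lt_of_le_of_lt (le_max_left _ _) hs2
  have hst : t₀ < s := lt_of_le_of_lt (le_max_right _ _) hs2
  have hsg : h*(B+2*δ) ≤ g s h := by
    have h6 := EReal.coe_lt_coe_iff.1 hs1
    rw [lt_div_iff₀ hhpos] at h6
    have h6' : (B+2*δ)*h = h*(B+2*δ) := by ring
    linarith
  have hB2δ0 : (0:ℝ) ≤ B + 2*δ := by linarith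
  have hgM : (M:ℝ)*κ*(B+δ) ≤ g s ((M:ℝ)*κ) := by
    have hm1 : g s h ≤ g s ((M:ℝ)*κ) := hmono s hst h _ hhpos hM1.le
    have e3 : ((M:ℝ)-1)*κ*(B+2*δ) ≤ h*(B+2*δ) := mul_le_mul_of_nonneg_right hM2 hB2δ0
    have e4 : (M:ℝ)*κ*(B+δ) ≤ ((M:ℝ)-1)*κ*(B+2*δ) := by
      have d1 : δ ≤ (M:ℝ)*δ - B - 2*δ := by linarith
      have d2 : κ*δ ≤ κ*((M:ℝ)*δ - B - 2*δ) := mul_le_mul_of_nonneg_left d1 hκ.le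
      have d3 : κ*((M:ℝ)*δ - B - 2*δ) = ((M:ℝ)-1)*κ*(B+2*δ) - (M:ℝ)*κ*(B+δ) := by ring
      linarith [mul_pos hκ hδ]
    linarith
  set φ : ℕ → ℝ := fun p => if p = 0 then 0 else g s ((p:ℝ)*κ) - (p:ℝ)*κ*c with hφdef
  obtain ⟨j₀, hj₀mem, hj₀min⟩ := Finset.exists_min_image (Finset.range (M+1)) φ
    ⟨0, Finset.mem_range.2 (Nat.succ_pos M)⟩
  have hj₀M : j₀ ≤ M := Nat.lt_succ_iff.1 (Finset.mem_range.1 hj₀mem)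
  have hφ0 : φ 0 = 0 := by simp [hφdef]
  have hφj₀0 : φ j₀ ≤ 0 := hφ0 ▸ hj₀min 0 (Finset.mem_range.2 (Nat.succ_pos M))
  have hj₀κ : (0:ℝ) ≤ (j₀:ℝ)*κ := by positivity
  refine ⟨s + (j₀:ℝ)*κ, by linarith, by linarith, ?_⟩
  intro q hq1 hq2
  have hqM : q ≤ M := le_trans hq2 hMm
  have hq1r : (1:ℝ) ≤ (q:ℝ) := by exact_mod_cast hq1
  have hq0 : (0:ℝ) < (q:ℝ)*κ := mul_pos (by linarith) hκ
  have hφmin : φ j₀ ≤ φ (j₀ + q) := by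
    by_cases hcase : j₀ + q ≤ M
    · exact hj₀min _ (Finset.mem_range.2 (Nat.lt_succ_of_le hcase))
    · push_neg at hcase
      have hne : j₀ + q ≠ 0 := by omega
      have hM1' : (1:ℕ) ≤ M := by omega
      have hMκpos : (0:ℝ) < (M:ℝ)*κ := mul_pos (by exact_mod_cast hM1') hκ
      have hMle : (M:ℝ)*κ ≤ ((j₀+q:ℕ):ℝ)*κ := by
        have h7 : (M:ℝ) ≤ ((j₀+q:ℕ):ℝ) := by exact_mod_cast hcase.le
        exact mul_le_mul_of_nonneg_right h7 hκ.le
      have hmono2 : g s ((M:ℝ)*κ) ≤ g s (((j₀+q:ℕ):ℝ)*κ) := hmono s hst _ _ hMκpos hMle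
      have eφ : φ (j₀+q) = g s (((j₀+q:ℕ):ℝ)*κ) - ((j₀+q:ℕ):ℝ)*κ*c := by
        simp only [hφdef]; rw [if_neg hne]
      have hqr : (q:ℝ) ≤ (m:ℝ)+1 := by exact_mod_cast hq2
      have hj₀r : (j₀:ℝ) ≤ (M:ℝ) := by exact_mod_cast hj₀M
      have e5 : ((j₀+q:ℕ):ℝ)*κ*c ≤ ((M:ℝ)+((m:ℝ)+1))*κ*c := by
        have h8 : ((j₀+q:ℕ):ℝ) ≤ (M:ℝ)+((m:ℝ)+1) := by push_cast; linarith
        exact mul_le_mul_of_nonneg_right (mul_le_mul_of_nonneg_right h8 hκ.le) hc0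
      have idA : (M:ℝ)*κ*(B+δ) - (M:ℝ)*κ*c = (M:ℝ)*κ*δ + (M:ℝ)*S := by
        rw [hcdef]; field_simp; ring
      have idB : ((M:ℝ)+((m:ℝ)+1))*κ*c = (M:ℝ)*κ*c + ((m:ℝ)+1)*κ*c := by ring
      have hMS0 : (0:ℝ) ≤ (M:ℝ)*S := by positivity
      linarith [eφ, hmono2, hgM, e5, hMc, idA, idB, hMS0, hφj₀0]
  by_cases hj0 : j₀ = 0
  · subst hj0
    simp only [Nat.cast_zero, zero_mul, add_zero]
    have h9 := hj₀min q (Finset.mem_range.2 (Nat.lt_succ_of_le hqM))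
    rw [hφ0] at h9
    have h10 : φ q = g s ((q:ℝ)*κ) - (q:ℝ)*κ*c := by
      simp only [hφdef]; rw [if_neg (show ¬ q = 0 by omega)]
    rw [h10] at h9
    linarith
  · have hj₀pos : 0 < (j₀:ℝ)*κ := mul_pos (by exact_mod_cast Nat.pos_of_ne_zero hj0) hκ
    have hdg := (abs_le.1 (hS s hst ((j₀:ℝ)*κ) hj₀pos ((q:ℝ)*κ) hq0)).2
    have hsum : (j₀:ℝ)*κ + (q:ℝ)*κ = ((j₀+q:ℕ):ℝ)*κ := by push_cast; ring
    rw [hsum] at hdg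
    have hne : j₀ + q ≠ 0 := by omega
    have e6 : φ (j₀+q) = g s (((j₀+q:ℕ):ℝ)*κ) - ((j₀+q:ℕ):ℝ)*κ*c := by
      simp only [hφdef]; rw [if_neg hne]
    have e7 : φ j₀ = g s ((j₀:ℝ)*κ) - (j₀:ℝ)*κ*c := by
      simp only [hφdef]; rw [if_neg hj0]
    have e8 : ((j₀+q:ℕ):ℝ)*κ*c - (j₀:ℝ)*κ*c = (q:ℝ)*κ*c := by push_cast; ring
    linarith [hφmin, hdg, e6, e7, e8]
lemma aux_assemble (t₀ S : ℝ) (g : ℝ → ℝ → ℝ)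
    (hmono : ∀ t > t₀, ∀ h₁ h₂ : ℝ, 0 < h₁ → h₁ ≤ h₂ → g t h₁ ≤ g t h₂)
    (hS0 : 0 ≤ S) (κ : ℝ) (hκ : 0 < κ) (B : ℕ → ℝ)
    (hB1 : ∀ n, 2*S/κ < B n)
    (tb : ℕ → ℝ)
    (htb1 : ∀ n : ℕ, (n:ℝ) < tb n) (htb2 : ∀ n : ℕ, t₀ < tb n)
    (htb3 : ∀ n : ℕ, ∀ q : ℕ, 1 ≤ q → q ≤ n + 1 →
      (q:ℝ)*κ*(B n - S/κ) - S ≤ g (tb n) ((q:ℝ)*κ)) :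
    Tendsto tb atTop atTop ∧
    ∀ h : ℝ, 2*κ ≤ h →
      liminf (fun n : ℕ => ((((h - κ)*(B n - S/κ) - S)/h : ℝ) : EReal)) atTop ≤
        liminf (fun n : ℕ => ((g (tb n) h / h : ℝ) : EReal)) atTop := by
  constructor
  · exact tendsto_atTop_mono (fun n => (htb1 n).le) tendsto_natCast_atTop_atTop
  · intro h hh
    have hh0 : (0:ℝ) < h := by linarith
    have hhκ2 : (2:ℝ) ≤ h/κ := by rw [le_div_iff₀ hκ]; linarith
    set q : ℕ := Nat.floor (h/κ) with hqdef
    have hq1 : 1 ≤ q := Nat.le_floor (by push_cast; linarith)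
    have hqle : (q:ℝ) ≤ h/κ := Nat.floor_le (by positivity)
    have hqκ : (q:ℝ)*κ ≤ h := (le_div_iff₀ hκ).1 hqle
    have hqgt : h/κ < (q:ℝ) + 1 := Nat.lt_floor_add_one _
    have hqκ2 : h - κ ≤ (q:ℝ)*κ := by
      have := (div_lt_iff₀ hκ).1 hqgt
      linarith
    have hq0 : (0:ℝ) < (q:ℝ)*κ := by
      have : (1:ℝ) ≤ (q:ℝ) := by exact_mod_cast hq1
      nlinarith
    refine Filter.liminf_le_liminf ?_ (by isBoundedDefault) (by isBoundedDefault)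
    filter_upwards [eventually_ge_atTop q] with n hn
    apply EReal.coe_le_coe_iff.2
    have hc0 : 0 ≤ B n - S/κ := by
      have hSκ : 0 ≤ S/κ := div_nonneg hS0 hκ.le
      have : 2*S/κ = S/κ + S/κ := by ring
      linarith [hB1 n]
    have hb1 : (q:ℝ)*κ*(B n - S/κ) - S ≤ g (tb n) ((q:ℝ)*κ) := htb3 n q hq1 (by omega)
    have hb2 : g (tb n) ((q:ℝ)*κ) ≤ g (tb n) h := hmono (tb n) (htb2 n) _ _ hq0 hqκ
    have hb3 : (h - κ)*(B n - S/κ) ≤ (q:ℝ)*κ*(B n - S/κ) :=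
      mul_le_mul_of_nonneg_right hqκ2 hc0
    exact (div_le_div_iff_of_pos_right hh0).2 (by linarith)

theorem stmt18 (t₀ S : ℝ) (g : ℝ → ℝ → ℝ)
    (hmono : ∀ t > t₀, ∀ h₁ h₂ : ℝ, 0 < h₁ → h₁ ≤ h₂ → g t h₁ ≤ g t h₂)
    (hS : ∀ t > t₀, ∀ h > (0 : ℝ), ∀ k > (0 : ℝ),
      |g t (h + k) - g (t + h) k - g t h| ≤ S) :
    (∀ t : ℕ → ℝ, Tendsto t atTop atTop →
        limsup (fun h : ℝ =>
            limsup (fun n : ℕ => ((g (t n) h / h : ℝ) : EReal)) atTop) atTop ≤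
          limsup (fun h : ℝ =>
            limsup (fun s : ℝ => ((g s h / h : ℝ) : EReal)) atTop) atTop) ∧
      ∀ κ > (0 : ℝ), ∃ tb : ℕ → ℝ, Tendsto tb atTop atTop ∧
        limsup (fun h : ℝ =>
            limsup (fun s : ℝ => ((g s h / h : ℝ) : EReal)) atTop) atTop ≤
          liminf (fun h : ℝ =>
              liminf (fun n : ℕ => ((g (tb n) h / h : ℝ) : EReal)) atTop) atTop +
            ((2 * S / κ : ℝ) : EReal) := by
  have hS0 : 0 ≤ S := le_trans (abs_nonneg _) (hS (t₀+1) (by linarith) 1 one_pos 1 one_pos)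
  have gLB := aux_gLB t₀ S g hmono hS
  constructor
  · intro t ht
    refine Filter.limsup_le_limsup (Filter.Eventually.of_forall fun h => ?_)
    show limsup (fun n : ℕ => ((g (t n) h / h : ℝ) : EReal)) atTop ≤
      limsup (fun s : ℝ => ((g s h / h : ℝ) : EReal)) atTop
    rw [show (fun n : ℕ => ((g (t n) h / h : ℝ) : EReal))
        = (fun s : ℝ => ((g s h / h : ℝ) : EReal)) ∘ t from rfl, Filter.limsup_comp]
    exact Filter.limsup_le_limsup_of_le ht
  · intro κ hκ
    set L := limsup (fun h : ℝ =>
        limsup (fun s : ℝ => ((g s h / h : ℝ) : EReal)) atTop) atTop with hLdef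
    have hSκ : 0 ≤ S/κ := div_nonneg hS0 hκ.le
    have h2Sκ : 2*S/κ = S/κ + S/κ := by ring
    by_cases hL2 : L ≤ ((2 * S / κ : ℝ) : EReal)
    · refine ⟨fun n : ℕ => max t₀ 0 + n + 1, ?_, ?_⟩
      · exact tendsto_atTop_mono
          (fun n : ℕ => by linarith [le_max_right t₀ (0:ℝ)] : ∀ n : ℕ, (n:ℝ) ≤ max t₀ 0 + n + 1)
          tendsto_natCast_atTop_atTop
      · have step1 : ∀ᶠ h : ℝ in atTop, ((-S/h : ℝ) : EReal) ≤
            liminf (fun n : ℕ => ((g (max t₀ 0 + n + 1) h / h : ℝ) : EReal)) atTop := by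
          filter_upwards [eventually_gt_atTop 0] with h hh
          refine Filter.le_liminf_of_le (by isBoundedDefault)
            (Filter.Eventually.of_forall fun n => ?_)
          apply EReal.coe_le_coe_iff.2
          have hgt : t₀ < max t₀ 0 + (n:ℝ) + 1 := by
            have h1 := le_max_left t₀ (0:ℝ)
            have h2 := Nat.cast_nonneg (α := ℝ) n
            linarith
          exact (div_le_div_iff_of_pos_right hh).2 (gLB _ hgt h hh)
        have step2 : liminf (fun h : ℝ => ((-S/h : ℝ) : EReal)) atTop = ((0:ℝ) : EReal) := by
          apply Filter.Tendsto.liminf_eq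
          apply EReal.tendsto_coe.2
          exact tendsto_const_nhds.div_atTop tendsto_id
        have hX0 : (0 : EReal) ≤ liminf (fun h : ℝ =>
            liminf (fun n : ℕ => ((g (max t₀ 0 + n + 1) h / h : ℝ) : EReal)) atTop) atTop := by
          calc (0:EReal) = ((0:ℝ) : EReal) := by norm_num
          _ = liminf (fun h : ℝ => ((-S/h : ℝ) : EReal)) atTop := step2.symm
          _ ≤ _ := Filter.liminf_le_liminf step1 (by isBoundedDefault) (by isBoundedDefault)
        calc L ≤ ((2 * S / κ : ℝ) : EReal) := hL2
        _ = 0 + ((2 * S / κ : ℝ) : EReal) := (zero_add _).symm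
        _ ≤ _ + ((2 * S / κ : ℝ) : EReal) := add_le_add hX0 le_rfl
    · have hL2' : ((2 * S / κ : ℝ) : EReal) < L := not_le.1 hL2
      by_cases hLtop : L = ⊤
      · have hkeyn : ∀ n : ℕ, ∃ s, (n:ℝ) < s ∧ t₀ < s ∧ ∀ q : ℕ, 1 ≤ q → q ≤ n + 1 →
            (q:ℝ)*κ*((2*S/κ + n + 1) - S/κ) - S ≤ g s ((q:ℝ)*κ) := by
          intro n
          refine aux_key t₀ S g hmono hS hS0 κ hκ (2*S/κ + n + 1) 1 one_pos ?_ ?_ n n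
          · have := Nat.cast_nonneg (α := ℝ) n; linarith
          · rw [← hLdef, hLtop]; exact EReal.coe_lt_top _
        choose tb htb1 htb2 htb3 using hkeyn
        obtain ⟨htend, hbnd⟩ := aux_assemble t₀ S g hmono hS0 κ hκ
          (fun n : ℕ => 2*S/κ + n + 1)
          (fun n => by have := Nat.cast_nonneg (α := ℝ) n; show 2*S/κ < 2*S/κ + (n:ℝ) + 1; linarith)
          tb htb1 htb2 htb3
        refine ⟨tb, htend, ?_⟩
        have hFh : ∀ᶠ h : ℝ in atTop, (⊤ : EReal) ≤
            liminf (fun n : ℕ => ((g (tb n) h / h : ℝ) : EReal)) atTop := by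
          filter_upwards [eventually_ge_atTop (2*κ)] with h hh
          refine le_trans (le_of_eq ?_) (hbnd h hh)
          symm
          apply Filter.Tendsto.liminf_eq
          rw [EReal.tendsto_nhds_top_iff_real]
          intro x
          have hhκpos : (0:ℝ) < h - κ := by linarith
          have hh0 : (0:ℝ) < h := by linarith
          have r2 : Tendsto (fun n : ℕ => (2*S/κ + (n:ℝ) + 1) - S/κ) atTop atTop := by
            refine tendsto_atTop_mono (fun n => ?_) tendsto_natCast_atTop_atTop
            linarith
          have r3 := r2.const_mul_atTop hhκpos
          have r4 : Tendsto (fun n : ℕ => (h-κ)*((2*S/κ + (n:ℝ) + 1) - S/κ) - S) atTop atTop :=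
            (tendsto_atTop_add_const_right atTop (-S) r3).congr
              (fun n => (sub_eq_add_neg _ _).symm)
          have r5 := r4.atTop_div_const hh0
          filter_upwards [r5.eventually_gt_atTop x] with n hn using EReal.coe_lt_coe_iff.2 hn
        have hXtop : liminf (fun h : ℝ =>
            liminf (fun n : ℕ => ((g (tb n) h / h : ℝ) : EReal)) atTop) atTop = ⊤ :=
          top_le_iff.1 (Filter.le_liminf_of_le (by isBoundedDefault) hFh)
        rw [hXtop, EReal.top_add_coe]
        exact le_top
      · have hLbot : L ≠ ⊥ := (bot_le.trans_lt hL2').ne'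
        set lam := L.toReal with hlamdef
        have hlam : ((lam : ℝ) : EReal) = L := EReal.coe_toReal hLtop hLbot
        have hlam2 : 2*S/κ < lam := by
          rw [← EReal.coe_lt_coe_iff, hlam]; exact hL2'
        set Bf : ℕ → ℝ := fun n => max ((lam + 2*S/κ)/2) (lam - 1/((n:ℝ)+1)) with hBfdef
        have hB1 : ∀ n, 2*S/κ < Bf n := fun n =>
          lt_of_lt_of_le (by linarith) (le_max_left _ _)
        have hBlt : ∀ n, Bf n < lam := by
          intro n
          apply max_lt (by linarith)
          have : 0 < 1/((n:ℝ)+1) := by positivity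
          linarith
        have hkeyn : ∀ n : ℕ, ∃ s, (n:ℝ) < s ∧ t₀ < s ∧ ∀ q : ℕ, 1 ≤ q → q ≤ n + 1 →
            (q:ℝ)*κ*(Bf n - S/κ) - S ≤ g s ((q:ℝ)*κ) := by
          intro n
          refine aux_key t₀ S g hmono hS hS0 κ hκ (Bf n) ((lam - Bf n)/4)
            (by linarith [hBlt n]) (hB1 n) ?_ n n
          rw [← hLdef, ← hlam]
          exact EReal.coe_lt_coe_iff.2 (by linarith [hBlt n])
        choose tb htb1 htb2 htb3 using hkeyn
        obtain ⟨htend, hbnd⟩ := aux_assemble t₀ S g hmono hS0 κ hκ Bf hB1 tb htb1 htb2 htb3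
        refine ⟨tb, htend, ?_⟩
        have hBt : Tendsto Bf atTop (𝓝 lam) := by
          have l0 : Tendsto (fun n : ℕ => lam - 1/((n:ℝ)+1)) atTop (𝓝 (lam - 0)) :=
            tendsto_const_nhds.sub tendsto_one_div_add_atTop_nhds_zero_nat
          rw [sub_zero] at l0
          have l1 := (tendsto_const_nhds (x := (lam + 2*S/κ)/2)).max l0
          rw [max_eq_right (by linarith : (lam + 2*S/κ)/2 ≤ lam)] at l1
          exact l1
        have hFh : ∀ᶠ h : ℝ in atTop, ((((h - κ)*(lam - S/κ) - S)/h : ℝ) : EReal) ≤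
            liminf (fun n : ℕ => ((g (tb n) h / h : ℝ) : EReal)) atTop := by
          filter_upwards [eventually_ge_atTop (2*κ)] with h hh
          refine le_trans (le_of_eq ?_) (hbnd h hh)
          symm
          apply Filter.Tendsto.liminf_eq
          apply EReal.tendsto_coe.2
          exact (((hBt.sub_const (S/κ)).const_mul (h-κ)).sub_const S).div_const h
        have hl : liminf (fun h : ℝ => ((((h - κ)*(lam - S/κ) - S)/h : ℝ) : EReal)) atTop
            = ((lam - S/κ : ℝ) : EReal) := by
          apply Filter.Tendsto.liminf_eq
          apply EReal.tendsto_coe.2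
          have p1 : Tendsto (fun h : ℝ => (lam - S/κ) - ((lam - S/κ)*κ + S)/h) atTop
              (𝓝 ((lam - S/κ) - 0)) :=
            tendsto_const_nhds.sub (tendsto_const_nhds.div_atTop tendsto_id)
          rw [sub_zero] at p1
          refine p1.congr' ?_
          filter_upwards [eventually_gt_atTop 0] with h hh
          field_simp
          ring
        have hXge : ((lam - S/κ : ℝ) : EReal) ≤ liminf (fun h : ℝ =>
            liminf (fun n : ℕ => ((g (tb n) h / h : ℝ) : EReal)) atTop) atTop := by
          calc ((lam - S/κ : ℝ) : EReal)
              = liminf (fun h : ℝ => ((((h - κ)*(lam - S/κ) - S)/h : ℝ) : EReal)) atTop := hl.symm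
          _ ≤ _ := Filter.liminf_le_liminf hFh (by isBoundedDefault) (by isBoundedDefault)
        calc L = ((lam : ℝ) : EReal) := hlam.symm
        _ ≤ ((lam - S/κ : ℝ) : EReal) + ((2 * S / κ : ℝ) : EReal) := by
            rw [← EReal.coe_add]
            apply EReal.coe_le_coe_iff.2
            linarith
        _ ≤ _ + ((2 * S / κ : ℝ) : EReal) := add_le_add hXge le_rfl
end

section
/- Let X be a metric space and x ∈ X such that for all λ > 0, limsup_{r→0} n(λr, B̄(x,r)) < ∞, and assume the doubling-type homogeneity condition: there exist c ≥ 1 and a ∈ (0,1] such that for all r ≤ a, λ, μ ≤ 1 and y, z ∈ B(x,r), n(λμr, B(y,λr)) ≤ c · n(λμr, B(z,λr)). Then the lower and upper local box dimensions of X at x lie between the tangential dimensions: δ̲_X(x) ≤ d̲_X(x) ≤ d̄_X(x) ≤ δ̄_X(x). -/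
open Metric Filter Topology

/-- Minimal cardinality of a finite family of open balls of radius `s` covering `E`
(`0` by convention if no finite cover exists). -/
noncomputable def coverNum {X : Type*} [MetricSpace X] (s : ℝ) (E : Set X) : ℕ :=
  sInf {n : ℕ | ∃ F : Finset X, F.card = n ∧ E ⊆ ⋃ y ∈ F, ball y s}

/-- Lower tangential dimension of `X` at `x`. -/
noncomputable def lowerTD {X : Type*} [MetricSpace X] (x : X) : EReal :=
  liminf (fun l : ℝ => liminf (fun r : ℝ =>
      ((Real.log (coverNum (l * r) (ball x r)) / Real.log (1 / l) : ℝ) : EReal))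
    (𝓝[>] (0 : ℝ))) (𝓝[>] (0 : ℝ))

/-- Upper tangential dimension of `X` at `x`. -/
noncomputable def upperTD {X : Type*} [MetricSpace X] (x : X) : EReal :=
  limsup (fun l : ℝ => limsup (fun r : ℝ =>
      ((Real.log (coverNum (l * r) (ball x r)) / Real.log (1 / l) : ℝ) : EReal))
    (𝓝[>] (0 : ℝ))) (𝓝[>] (0 : ℝ))

/-- Lower local box dimension of `X` at `x`:
`lim_{R→0⁺} liminf_{r→0⁺} log n(r, B(x,R)) / log (1/r)` (the limit in `R` exists
by monotonicity, hence equals the `liminf`). -/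
noncomputable def lowerLocalBoxDim {X : Type*} [MetricSpace X] (x : X) : EReal :=
  liminf (fun R : ℝ => liminf (fun r : ℝ =>
      ((Real.log (coverNum r (ball x R)) / Real.log (1 / r) : ℝ) : EReal))
    (𝓝[>] (0 : ℝ))) (𝓝[>] (0 : ℝ))

/-- Upper local box dimension of `X` at `x`:
`lim_{R→0⁺} limsup_{r→0⁺} log n(r, B(x,R)) / log (1/r)` (the limit in `R` exists
by monotonicity, hence equals the `limsup`). -/
noncomputable def upperLocalBoxDim {X : Type*} [MetricSpace X] (x : X) : EReal :=
  limsup (fun R : ℝ => limsup (fun r : ℝ =>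
      ((Real.log (coverNum r (ball x R)) / Real.log (1 / r) : ℝ) : EReal))
    (𝓝[>] (0 : ℝ))) (𝓝[>] (0 : ℝ))

section helpers
open Set
variable {X : Type*} [MetricSpace X]

variable {X : Type*} [MetricSpace X] {s s' : ℝ} {E E' : Set X}

lemma coverNum_le_card {F : Finset X} (h : E ⊆ ⋃ y ∈ F, ball y s) : coverNum s E ≤ F.card :=
  Nat.sInf_le ⟨F, rfl, h⟩

lemma coverNum_exists (h : ∃ F : Finset X, E ⊆ ⋃ y ∈ F, ball y s) :
    ∃ F : Finset X, F.card = coverNum s E ∧ E ⊆ ⋃ y ∈ F, ball y s := by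
  obtain ⟨F, hF⟩ := h
  have hne : {n : ℕ | ∃ F : Finset X, F.card = n ∧ E ⊆ ⋃ y ∈ F, ball y s}.Nonempty :=
    ⟨F.card, F, rfl, hF⟩
  exact Nat.sInf_mem hne

lemma one_le_coverNum (hE : E.Nonempty) (h : ∃ F : Finset X, E ⊆ ⋃ y ∈ F, ball y s) :
    1 ≤ coverNum s E := by
  obtain ⟨F, hcard, hcov⟩ := coverNum_exists h
  rcases Nat.eq_zero_or_pos (coverNum s E) with h0 | h1
  · exfalso
    rw [h0, Finset.card_eq_zero] at hcard
    obtain ⟨e, he⟩ := hE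
    have := hcov he
    simp [hcard] at this
  · exact h1

lemma coverNum_pos_of_exists_of_pos (h1 : 1 ≤ coverNum s E) :
    ∃ F : Finset X, F.card = coverNum s E ∧ E ⊆ ⋃ y ∈ F, ball y s := by
  have : coverNum s E ∈ {n : ℕ | ∃ F : Finset X, F.card = n ∧ E ⊆ ⋃ y ∈ F, ball y s} := by
    apply Nat.sInf_mem
    by_contra hne
    rw [Set.not_nonempty_iff_eq_empty] at hne
    have h0 : coverNum s E = 0 := by simp [coverNum, hne]
    omega
  exact this

lemma coverNum_mono_radius (hss : s ≤ s') (h : ∃ F : Finset X, E ⊆ ⋃ y ∈ F, ball y s) :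
    coverNum s' E ≤ coverNum s E := by
  obtain ⟨F, hcard, hcov⟩ := coverNum_exists h
  rw [← hcard]
  exact coverNum_le_card (hcov.trans (by
    apply Set.iUnion₂_mono
    intro y _
    exact ball_subset_ball hss))

lemma coverNum_mono_set (hEE : E ⊆ E') (h : ∃ F : Finset X, E' ⊆ ⋃ y ∈ F, ball y s) :
    coverNum s E ≤ coverNum s E' := by
  obtain ⟨F, hcard, hcov⟩ := coverNum_exists h
  rw [← hcard]
  exact coverNum_le_card (hEE.trans hcov)

lemma log_nat_nonneg (n : ℕ) : 0 ≤ Real.log n := by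
  cases n with
  | zero => simp
  | succ k => exact Real.log_nonneg (by exact_mod_cast Nat.succ_le_succ (Nat.zero_le k))

lemma ev_pos_iff {p : ℝ → Prop} :
    (∀ᶠ r in 𝓝[>] (0:ℝ), p r) ↔ ∃ ε > (0:ℝ), ∀ r, 0 < r → r < ε → p r := by
  rw [(nhdsGT_basis (0:ℝ)).eventually_iff]
  constructor
  · rintro ⟨ε, hε, h⟩; exact ⟨ε, hε, fun r h1 h2 => h ⟨h1, h2⟩⟩
  · rintro ⟨ε, hε, h⟩; exact ⟨ε, hε, fun r hr => h r hr.1 hr.2⟩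

lemma freq_pos_iff {p : ℝ → Prop} :
    (∃ᶠ r in 𝓝[>] (0:ℝ), p r) ↔ ∀ ε > (0:ℝ), ∃ r, 0 < r ∧ r < ε ∧ p r := by
  rw [(nhdsGT_basis (0:ℝ)).frequently_iff]
  constructor
  · rintro h ε hε; obtain ⟨r, hr, hp⟩ := h ε hε; exact ⟨r, hr.1, hr.2, hp⟩
  · rintro h ε hε; obtain ⟨r, h1, h2, hp⟩ := h ε hε; exact ⟨r, ⟨h1, h2⟩, hp⟩


variable (x : X) {c a : ℝ}


lemma transfer (hc : 1 ≤ c)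
    (hhom : ∀ r : ℝ, 0 < r → r ≤ a → ∀ l m : ℝ, 0 < l → l ≤ 1 → 0 < m → m ≤ 1 →
      ∀ y ∈ ball x r, ∀ z ∈ ball x r,
        (coverNum (l * m * r) (ball y (l * r)) : ℝ) ≤
          c * (coverNum (l * m * r) (ball z (l * r)) : ℝ))
    {r l m : ℝ} (hr : 0 < r) (hra : r ≤ a) (hl : 0 < l) (hl1 : l ≤ 1)
    (hm : 0 < m) (hm1 : m ≤ 1) {y : X} (hy : y ∈ ball x r) {D : ℝ}
    (hD : ∃ F : Finset X, (F.card : ℝ) ≤ D ∧ ball x (l*r) ⊆ ⋃ w ∈ F, ball w (l*m*r)) :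
    ∃ F : Finset X, (F.card : ℝ) ≤ c * D ∧ ball y (l*r) ⊆ ⋃ w ∈ F, ball w (l*m*r) := by
  obtain ⟨F₀, hF₀card, hF₀cov⟩ := hD
  have hc0 : (0:ℝ) < c := lt_of_lt_of_le one_pos hc
  have hx1 : 1 ≤ coverNum (l*m*r) (ball x (l*r)) :=
    one_le_coverNum ⟨x, mem_ball_self (by positivity)⟩ ⟨F₀, hF₀cov⟩
  have hxy := hhom r hr hra l m hl hl1 hm hm1 x (mem_ball_self hr) y hy
  have hyx := hhom r hr hra l m hl hl1 hm hm1 y hy x (mem_ball_self hr)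
  set ny := coverNum (l*m*r) (ball y (l*r)) with hny
  set nx := coverNum (l*m*r) (ball x (l*r)) with hnx
  have hny1 : 1 ≤ ny := by
    by_contra h
    push_neg at h
    interval_cases ny
    · simp at hxy
      have : (1:ℝ) ≤ nx := by exact_mod_cast hx1
      linarith
  obtain ⟨F, hFcard, hFcov⟩ := coverNum_pos_of_exists_of_pos hny1
  refine ⟨F, ?_, hFcov⟩
  have hnxF : (nx : ℝ) ≤ F₀.card := by exact_mod_cast coverNum_le_card hF₀cov
  have hFc : (F.card : ℝ) = (ny : ℝ) := by rw [hFcard]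
  rw [hFc]
  calc (ny : ℝ) ≤ c * nx := hyx
    _ ≤ c * D := by
        apply mul_le_mul_of_nonneg_left (le_trans hnxF hF₀card) (le_of_lt hc0)

lemma claim_iter (hc : 1 ≤ c) (ha : 0 < a)
    (hhom : ∀ r : ℝ, 0 < r → r ≤ a → ∀ l m : ℝ, 0 < l → l ≤ 1 → 0 < m → m ≤ 1 →
      ∀ y ∈ ball x r, ∀ z ∈ ball x r,
        (coverNum (l * m * r) (ball y (l * r)) : ℝ) ≤
          c * (coverNum (l * m * r) (ball z (l * r)) : ℝ))
    {ν r₀ B : ℝ} (hν : 0 < ν) (hν2 : 2 * ν ≤ 1)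
    (hr₀ : 0 < r₀) (hr₀a : r₀ ≤ a) (hB : 1 ≤ B)
    (Hν : ∀ r : ℝ, 0 < r → r ≤ r₀ →
      ∃ F : Finset X, (F.card : ℝ) ≤ B ∧ ball x r ⊆ ⋃ y ∈ F, ball y (ν * r)) :
    ∀ k : ℕ, ∀ r : ℝ, 0 < r → r ≤ r₀ →
      ∃ F : Finset X, (F.card : ℝ) ≤ (c * B)^k ∧
        ball x r ⊆ ⋃ y ∈ F, ball y ((2*ν)^k * r) := by
  classical
  have hc0 : (0:ℝ) < c := lt_of_lt_of_le one_pos hc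
  intro k
  induction k with
  | zero =>
    intro r hr _
    exact ⟨{x}, by simp, by simp⟩
  | succ k IH =>
    intro r hr hrr₀
    obtain ⟨G, hGcard, hGcov⟩ := Hν r hr hrr₀
    set G' : Finset X := G.filter (fun z => (ball z (ν*r) ∩ ball x r).Nonempty) with hG'
    have hw : ∀ z ∈ G', ∃ w, w ∈ ball z (ν*r) ∩ ball x r := by
      intro z hz
      exact (Finset.mem_filter.mp hz).2
    choose! w hwmem using hw
    have hσr : 0 < 2*ν*r := by positivity
    have hσrr₀ : 2*ν*r ≤ r₀ := by nlinarith
    obtain ⟨F', hF'card, hF'cov⟩ := IH (2*ν*r) hσr hσrr₀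
    have hIH' : ∃ F : Finset X, (F.card : ℝ) ≤ (c*B)^k ∧
        ball x ((2*ν)*r) ⊆ ⋃ ww ∈ F, ball ww ((2*ν)*(2*ν)^k*r) := by
      refine ⟨F', hF'card, ?_⟩
      have e1 : (2*ν)*(2*ν)^k*r = (2*ν)^k * (2*ν*r) := by ring
      rw [e1, show (2*ν)*r = 2*ν*r from rfl]
      exact hF'cov
    have hm0 : (0:ℝ) < (2*ν)^k := by positivity
    have hm1 : (2*ν)^k ≤ 1 := pow_le_one₀ (by positivity) hν2
    have htr : ∀ z ∈ G', ∃ Fz : Finset X, (Fz.card : ℝ) ≤ c * (c*B)^k ∧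
        ball (w z) ((2*ν)*r) ⊆ ⋃ ww ∈ Fz, ball ww ((2*ν)*(2*ν)^k*r) := by
      intro z hz
      exact transfer x hc hhom hr (le_trans hrr₀ hr₀a) (by positivity) hν2 hm0 hm1
        (hwmem z hz).2 hIH'
    choose! Fz hFzcard hFzcov using htr
    refine ⟨G'.biUnion Fz, ?_, ?_⟩
    · calc ((G'.biUnion Fz).card : ℝ) ≤ ∑ z ∈ G', ((Fz z).card : ℝ) := by
            exact_mod_cast Nat.cast_le.mpr (Finset.card_biUnion_le)
        _ ≤ ∑ _z ∈ G', c * (c*B)^k := Finset.sum_le_sum (fun z hz => hFzcard z hz)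
        _ = G'.card * (c * (c*B)^k) := by rw [Finset.sum_const, nsmul_eq_mul]
        _ ≤ B * (c * (c*B)^k) := by
            apply mul_le_mul_of_nonneg_right _ (by positivity)
            calc (G'.card : ℝ) ≤ G.card := by
                  exact_mod_cast Nat.cast_le.mpr (Finset.card_filter_le _ _)
              _ ≤ B := hGcard
        _ = (c*B)^(k+1) := by ring
    · intro u hu
      obtain ⟨z, hzG, hz⟩ := by
        have := hGcov hu
        simpa using this
      have hzG' : z ∈ G' := Finset.mem_filter.mpr ⟨hzG, ⟨u, hz, hu⟩⟩
      have hwz := hwmem z hzG'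
      have huw : u ∈ ball (w z) ((2*ν)*r) := by
        have h1 : dist u (w z) ≤ dist u z + dist z (w z) := dist_triangle _ _ _
        have h2 : dist u z < ν * r := mem_ball.mp hz
        have h3 : dist z (w z) < ν * r := by
          have := hwz.1
          rw [mem_ball, dist_comm] at this
          linarith [this]
        rw [mem_ball]
        linarith
      have := hFzcov z hzG' huw
      rw [Set.mem_iUnion₂] at this ⊢
      obtain ⟨ww, hww, h⟩ := this
      refine ⟨ww, Finset.mem_biUnion.mpr ⟨z, hzG', hww⟩, ?_⟩
      have : (2*ν)*(2*ν)^k*r = (2*ν)^(k+1)*r := by ring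
      rwa [← this]


lemma pack (hc : 1 ≤ c)
    (hhom : ∀ r : ℝ, 0 < r → r ≤ a → ∀ l m : ℝ, 0 < l → l ≤ 1 → 0 < m → m ≤ 1 →
      ∀ y ∈ ball x r, ∀ z ∈ ball x r,
        (coverNum (l * m * r) (ball y (l * r)) : ℝ) ≤
          c * (coverNum (l * m * r) (ball z (l * r)) : ℝ))
    {R l μ : ℝ} (hR : 0 < R) (hRa : R ≤ a) (hl : 0 < l) (hl1 : l ≤ 1)
    (hμ : 0 < μ) (hμ4 : μ ≤ 1/4)
    (hex : ∃ F : Finset X, ball x R ⊆ ⋃ y ∈ F, ball y (μ*l*R)) :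
    (coverNum (l*R) (ball x (R/2)) : ℝ) * (coverNum (μ*l*R) (ball x (l*R/4)) : ℝ)
      ≤ c * (coverNum (μ*l*R) (ball x R) : ℝ) := by
  classical
  set s := μ*l*R with hs
  have hs0 : 0 < s := by positivity
  obtain ⟨F, hFcard, hFcov⟩ := coverNum_exists hex
  -- separated sets
  set SS : Set ℕ := {m : ℕ | ∃ T : Finset X, T.card = m ∧ ↑T ⊆ ball x (R/2) ∧
      (∀ p ∈ T, ∀ q ∈ T, p ≠ q → l*R ≤ dist p q)} with hSS
  have hbound : ∀ m ∈ SS, m ≤ F.card := by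
    rintro m ⟨T, hTcard, hTsub, hTsep⟩
    have hchoice : ∀ p ∈ T, ∃ w, w ∈ F ∧ p ∈ ball w s := by
      intro p hp
      have hpR : p ∈ ball x R := by
        have := hTsub hp
        rw [mem_ball] at this ⊢
        linarith
      have := hFcov hpR
      simpa using this
    choose! f hf1 hf2 using hchoice
    rw [← hTcard]
    apply Finset.card_le_card_of_injOn f (fun p hp => hf1 p hp)
    intro p hp q hq hpq
    by_contra hne
    have h1 : dist p q ≤ dist p (f p) + dist (f q) q := by
      calc dist p q ≤ dist p (f p) + dist (f p) q := dist_triangle _ _ _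
        _ = dist p (f p) + dist (f q) q := by rw [hpq]
    have h2 : dist p (f p) < s := mem_ball.mp (hf2 p hp)
    have h3 : dist (f q) q < s := by rw [dist_comm]; exact mem_ball.mp (hf2 q hq)
    have h4 := hTsep p hp q hq hne
    have : l*R ≤ 2*s := by linarith
    rw [hs] at this
    nlinarith
  have hSSne : SS.Nonempty := ⟨0, ∅, by simp, by simp, by simp⟩
  have hSSbdd : BddAbove SS := ⟨F.card, fun m hm => hbound m hm⟩
  obtain ⟨T, hTcard, hTsub, hTsep⟩ : sSup SS ∈ SS := Nat.sSup_mem hSSne hSSbdd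
  -- maximality gives covering of ball x (R/2) by (l*R)-balls centered in T
  have hTmax : ball x (R/2) ⊆ ⋃ p ∈ T, ball p (l*R) := by
    intro y hy
    by_contra hyn
    have hsep' : ∀ p ∈ T, l*R ≤ dist y p := by
      intro p hp
      by_contra h
      push_neg at h
      exact hyn (Set.mem_iUnion₂.mpr ⟨p, hp, mem_ball.mpr h⟩)
    have hyT : y ∉ T := by
      intro hyT
      have := hsep' y hyT
      simp at this
      nlinarith
    have : (T.card + 1) ∈ SS := by
      refine ⟨insert y T, by rw [Finset.card_insert_of_notMem hyT], ?_, ?_⟩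
      · intro p hp
        simp only [Finset.coe_insert, Set.mem_insert_iff] at hp
        rcases hp with rfl | hp
        · exact hy
        · exact hTsub hp
      · intro p hp q hq hpq
        rw [Finset.mem_insert] at hp hq
        rcases hp with rfl | hp
        · rcases hq with rfl | hq
          · exact absurd rfl hpq
          · exact hsep' q hq
        · rcases hq with rfl | hq
          · rw [dist_comm]; exact hsep' p hp
          · exact hTsep p hp q hq hpq
    have := le_csSup hSSbdd this
    rw [hTcard] at this
    omega
  have hcov1 : (coverNum (l*R) (ball x (R/2)) : ℝ) ≤ T.card := by
    exact_mod_cast coverNum_le_card hTmax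
  -- counting
  set A : X → Finset X := fun p => F.filter (fun w => (ball w s ∩ ball p (l*R/4)).Nonempty) with hA
  have hApcov : ∀ p ∈ T, ball p (l*R/4) ⊆ ⋃ w ∈ A p, ball w s := by
    intro p hp z hz
    have hzR : z ∈ ball x R := by
      have h1 : dist z p < l*R/4 := mem_ball.mp hz
      have h2 : dist p x < R/2 := mem_ball.mp (hTsub hp)
      rw [mem_ball]
      calc dist z x ≤ dist z p + dist p x := dist_triangle _ _ _
        _ < l*R/4 + R/2 := by linarith
        _ ≤ R := by nlinarith
    obtain ⟨w, hwF, hzw⟩ := by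
      have := hFcov hzR
      simpa using this
    exact Set.mem_iUnion₂.mpr ⟨w, Finset.mem_filter.mpr ⟨hwF, ⟨z, hzw, hz⟩⟩, hzw⟩
  have hhomp : ∀ p ∈ T, (coverNum s (ball x (l*R/4)) : ℝ) ≤ c * (coverNum s (ball p (l*R/4)) : ℝ) := by
    intro p hp
    have hpR : p ∈ ball x R := by
      have := hTsub hp
      rw [mem_ball] at this ⊢
      linarith
    have := hhom R hR hRa (l/4) (4*μ) (by positivity) (by linarith) (by positivity) (by linarith)
      x (mem_ball_self hR) p hpR
    have e1 : l/4*(4*μ)*R = s := by rw [hs]; ring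
    have e2 : l/4*R = l*R/4 := by ring
    rwa [e1, e2] at this
  have hdisj : ∀ p ∈ T, ∀ q ∈ T, p ≠ q → Disjoint (A p) (A q) := by
    intro p hp q hq hpq
    rw [Finset.disjoint_left]
    intro w hwp hwq
    obtain ⟨u, hu1, hu2⟩ := (Finset.mem_filter.mp hwp).2
    obtain ⟨v, hv1, hv2⟩ := (Finset.mem_filter.mp hwq).2
    have h4 := hTsep p hp q hq hpq
    have e1 : dist u p < l*R/4 := mem_ball.mp hu2
    have e2 : dist v q < l*R/4 := mem_ball.mp hv2
    have e3 : dist u w < s := mem_ball.mp hu1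
    have e4 : dist v w < s := mem_ball.mp hv1
    have htt : dist p q ≤ dist u p + dist u w + dist v w + dist v q := by
      have t1 : dist p q ≤ dist p u + dist u q := dist_triangle _ _ _
      have t2 : dist u q ≤ dist u w + dist w q := dist_triangle _ _ _
      have t3 : dist w q ≤ dist w v + dist v q := dist_triangle _ _ _
      rw [dist_comm p u] at t1
      rw [dist_comm w v] at t3
      linarith
    rw [hs] at e3 e4
    nlinarith
  have hsum : (T.card : ℝ) * (coverNum s (ball x (l*R/4)) : ℝ) ≤ c * F.card := by
    have h1 : ∀ p ∈ T, (coverNum s (ball x (l*R/4)) : ℝ) ≤ c * ((A p).card : ℝ) := by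
      intro p hp
      calc (coverNum s (ball x (l*R/4)) : ℝ) ≤ c * (coverNum s (ball p (l*R/4)) : ℝ) := hhomp p hp
        _ ≤ c * ((A p).card : ℝ) := by
            apply mul_le_mul_of_nonneg_left _ (by linarith)
            exact_mod_cast coverNum_le_card (hApcov p hp)
    calc (T.card : ℝ) * (coverNum s (ball x (l*R/4)) : ℝ)
        = ∑ _p ∈ T, (coverNum s (ball x (l*R/4)) : ℝ) := by rw [Finset.sum_const, nsmul_eq_mul]
      _ ≤ ∑ p ∈ T, c * ((A p).card : ℝ) := Finset.sum_le_sum h1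
      _ = c * ∑ p ∈ T, ((A p).card : ℝ) := by rw [Finset.mul_sum]
      _ ≤ c * F.card := by
          apply mul_le_mul_of_nonneg_left _ (by linarith)
          have : ∑ p ∈ T, (A p).card = (T.biUnion A).card := (Finset.card_biUnion hdisj).symm
          have h2 : (T.biUnion A).card ≤ F.card := by
            apply Finset.card_le_card
            intro w hw
            obtain ⟨p, _, hwp⟩ := Finset.mem_biUnion.mp hw
            exact (Finset.mem_filter.mp hwp).1
          calc (∑ p ∈ T, ((A p).card : ℝ)) = ((∑ p ∈ T, (A p).card : ℕ) : ℝ) := by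
                rw [Nat.cast_sum]
            _ ≤ (F.card : ℝ) := by rw [this]; exact_mod_cast h2
  calc (coverNum (l*R) (ball x (R/2)) : ℝ) * (coverNum s (ball x (l*R/4)) : ℝ)
      ≤ (T.card : ℝ) * (coverNum s (ball x (l*R/4)) : ℝ) := by
        apply mul_le_mul_of_nonneg_right hcov1 (by positivity)
    _ ≤ c * F.card := hsum
    _ = c * (coverNum s (ball x R) : ℝ) := by rw [hFcard]



lemma ereal_le_add_eps {u : EReal} {t : ℝ}
    (h : ∀ ε : ℝ, 0 < ε → u ≤ ((t + ε : ℝ) : EReal)) : u ≤ (t : EReal) := by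
  by_contra h'
  push_neg at h'
  obtain ⟨v, hv1, hv2⟩ := EReal.exists_between_coe_real h'
  have := h (v - t) (by exact_mod_cast sub_pos.mpr (EReal.coe_lt_coe_iff.mp hv1))
  rw [show t + (v - t) = v by ring] at this
  exact absurd (lt_of_le_of_lt this hv2) (lt_irrefl _)

lemma ereal_sub_eps_le {u : EReal} {t : ℝ}
    (h : ∀ ε : ℝ, 0 < ε → ((t - ε : ℝ) : EReal) ≤ u) : (t : EReal) ≤ u := by
  by_contra h'
  push_neg at h'
  obtain ⟨v, hv1, hv2⟩ := EReal.exists_between_coe_real h'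
  have := h (t - v) (by exact_mod_cast sub_pos.mpr (EReal.coe_lt_coe_iff.mp hv2))
  rw [show t - (t - v) = v by ring] at this
  exact absurd (lt_of_lt_of_le hv1 this) (lt_irrefl _)

lemma ratio_nonneg (n : ℕ) {q : ℝ} (hq : 1 < q) :
    (0:ℝ) ≤ Real.log n / Real.log q :=
  div_nonneg (log_nat_nonneg n) (le_of_lt (Real.log_pos hq))

lemma upperTD_nonneg (x : X) : (0 : EReal) ≤ upperTD x := by
  apply le_limsup_of_frequently_le'
  apply Eventually.frequently
  have hev : ∀ᶠ l in 𝓝[>] (0:ℝ), 0 < l ∧ l < 1 :=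
    ev_pos_iff.mpr ⟨1, one_pos, fun r h1 h2 => ⟨h1, h2⟩⟩
  filter_upwards [hev] with l hl
  apply le_limsup_of_frequently_le'
  apply Eventually.frequently
  apply Eventually.of_forall
  intro r
  have h1 : (1:ℝ) < 1 / l := by
    rw [lt_div_iff₀ hl.1]; linarith [hl.2]
  exact EReal.coe_nonneg.mpr (ratio_nonneg _ h1)

lemma lowerBox_nonneg (x : X) : (0 : EReal) ≤ lowerLocalBoxDim x := by
  apply le_liminf_of_le (by isBoundedDefault)
  apply Eventually.of_forall
  intro R
  apply le_liminf_of_le (by isBoundedDefault)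
  have hev : ∀ᶠ r in 𝓝[>] (0:ℝ), 0 < r ∧ r < 1 :=
    ev_pos_iff.mpr ⟨1, one_pos, fun r h1 h2 => ⟨h1, h2⟩⟩
  filter_upwards [hev] with r hr
  have h1 : (1:ℝ) < 1 / r := by
    rw [lt_div_iff₀ hr.1]; linarith [hr.2]
  exact EReal.coe_nonneg.mpr (ratio_nonneg _ h1)

lemma middle_ineq (x : X) : lowerLocalBoxDim x ≤ upperLocalBoxDim x := by
  apply le_trans _ (liminf_le_limsup (f := 𝓝[>] (0:ℝ)))
  apply liminf_le_liminf (Eventually.of_forall (fun R => liminf_le_limsup))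
    (by isBoundedDefault) (by isBoundedDefault)



set_option maxHeartbeats 1000000 in
lemma upper_main (x : X) {c a : ℝ}
    (hfin : ∀ l > (0 : ℝ), ∃ C : ℕ, ∀ᶠ r in 𝓝[>] (0 : ℝ),
      ∃ F : Finset X, F.card ≤ C ∧ closedBall x r ⊆ ⋃ y ∈ F, ball y (l * r))
    (hc : 1 ≤ c) (ha : 0 < a) (ha1 : a ≤ 1)
    (hhom : ∀ r : ℝ, 0 < r → r ≤ a → ∀ l m : ℝ, 0 < l → l ≤ 1 → 0 < m → m ≤ 1 →
      ∀ y ∈ ball x r, ∀ z ∈ ball x r,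
        (coverNum (l * m * r) (ball y (l * r)) : ℝ) ≤
          c * (coverNum (l * m * r) (ball z (l * r)) : ℝ)) :
    upperLocalBoxDim x ≤ upperTD x := by
  classical
  by_contra hcon
  push_neg at hcon
  obtain ⟨t, ht1, ht2⟩ := EReal.exists_between_coe_real hcon
  have ht0 : 0 < t := by
    have h := lt_of_le_of_lt (upperTD_nonneg x) ht1
    exact_mod_cast h
  have hlogc : 0 ≤ Real.log c := Real.log_nonneg hc
  have hlog2 : 0 ≤ Real.log 2 := Real.log_nonneg one_le_two
  have hlog2' : Real.log 2 ≤ 1 := by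
    have := Real.log_le_sub_one_of_pos (by norm_num : (0:ℝ) < 2)
    linarith
  have key : ∀ ε : ℝ, 0 < ε → upperLocalBoxDim x ≤ ((t + ε : ℝ) : EReal) := by
    intro ε hε
    have hev1 := eventually_lt_of_limsup_lt ht1
    rw [ev_pos_iff] at hev1
    obtain ⟨l₁, hl₁, hG⟩ := hev1
    have hW : 0 ≤ Real.log c + (t+ε)*Real.log 2 := by
      have := mul_nonneg (show (0:ℝ) ≤ t+ε by linarith) hlog2
      linarith
    set K := (Real.log c + (t+ε)*Real.log 2)/(ε/2) + 1 with hK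
    have hK1 : 1 ≤ K := by
      rw [hK]
      have := div_nonneg hW (show (0:ℝ) ≤ ε/2 by linarith)
      linarith
    have hKW : (ε/2) * K = Real.log c + (t+ε)*Real.log 2 + (ε/2) := by
      rw [hK, mul_add, mul_one, mul_div_cancel₀ _ (show (ε/2) ≠ 0 by positivity)]
    clear_value K
    set ν := min (min (l₁/2) (1/8)) (Real.exp (-K)) with hν
    have hν0 : 0 < ν := by
      rw [hν]
      exact lt_min (lt_min (by linarith) (by norm_num)) (Real.exp_pos _)
    have hν8 : ν ≤ 1/8 := le_trans (min_le_left _ _) (min_le_right _ _)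
    have hνl₁ : ν < l₁ := by
      have h1 : ν ≤ min (l₁/2) (1/8) := min_le_left _ _
      have h2 : min (l₁/2) (1/8) ≤ l₁/2 := min_le_left _ _
      linarith
    have hνK : ν ≤ Real.exp (-K) := min_le_right _ _
    clear_value ν
    have hν1 : ν < 1 := by linarith
    set L := Real.log (1/ν) with hLdef
    have hL : K ≤ L := by
      have h2 : Real.log ν ≤ -K := by
        calc Real.log ν ≤ Real.log (Real.exp (-K)) :=
              (Real.log_le_log_iff hν0 (Real.exp_pos _)).mpr hνK
          _ = -K := Real.log_exp _
      rw [hLdef, one_div, Real.log_inv]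
      linarith
    have hL0 : 0 < L := lt_of_lt_of_le (by linarith) hL
    have hGν := hG ν hν0 hνl₁
    have hev2 := eventually_lt_of_limsup_lt hGν
    rw [ev_pos_iff] at hev2
    obtain ⟨ρ₁, hρ₁, hrat⟩ := hev2
    obtain ⟨C, hC⟩ := hfin ν hν0
    rw [ev_pos_iff] at hC
    obtain ⟨ρ₂, hρ₂, hCov⟩ := hC
    set B := Real.exp (t * L) with hB
    have hBpos : 0 < B := Real.exp_pos _
    have hlogB : Real.log B = t * L := by rw [hB, Real.log_exp]
    have hB1 : 1 ≤ B := by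
      rw [hB, ← Real.exp_zero]
      exact Real.exp_le_exp.mpr (mul_nonneg ht0.le hL0.le)
    clear_value B
    set r₀ := min (min (ρ₁/2) (ρ₂/2)) a with hr₀
    have hr₀0 : 0 < r₀ := by
      rw [hr₀]; exact lt_min (lt_min (by linarith) (by linarith)) ha
    have hr₀a : r₀ ≤ a := min_le_right _ _
    have hr₀ρ₁ : r₀ ≤ ρ₁/2 := le_trans (min_le_left _ _) (min_le_left _ _)
    have hr₀ρ₂ : r₀ ≤ ρ₂/2 := le_trans (min_le_left _ _) (min_le_right _ _)
    clear_value r₀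
    have Hν : ∀ r : ℝ, 0 < r → r ≤ r₀ →
        ∃ F : Finset X, (F.card : ℝ) ≤ B ∧ ball x r ⊆ ⋃ y ∈ F, ball y (ν * r) := by
      intro r hr hrr₀
      have hrρ₂ : r < ρ₂ := by linarith
      have hrρ₁ : r < ρ₁ := by linarith
      obtain ⟨F', _, hF'cov⟩ := hCov r hr hrρ₂
      have hex : ∃ F : Finset X, ball x r ⊆ ⋃ y ∈ F, ball y (ν * r) :=
        ⟨F', (ball_subset_closedBall).trans hF'cov⟩
      obtain ⟨F, hFcard, hFcov⟩ := coverNum_exists hex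
      refine ⟨F, ?_, hFcov⟩
      have hratr := hrat r hr hrρ₁
      have hratr' : Real.log (coverNum (ν*r) (ball x r)) / Real.log (1/ν) < t := by
        exact_mod_cast hratr
      rw [← hLdef] at hratr'
      have hlt : Real.log (coverNum (ν*r) (ball x r)) < t * L := (div_lt_iff₀ hL0).mp hratr'
      rw [hFcard]
      rcases Nat.eq_zero_or_pos (coverNum (ν*r) (ball x r)) with h0 | hpos
      · rw [h0]; push_cast; linarith
      · have h1 : (coverNum (ν*r) (ball x r) : ℝ) < B := by
          rw [← hlogB] at hlt
          exact (Real.log_lt_log_iff (by exact_mod_cast hpos) hBpos).mp hlt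
        linarith
    have hclaim := claim_iter x hc ha hhom hν0 (by linarith) hr₀0 hr₀a hB1 Hν
    set σ := 2*ν with hσ
    have hσ0 : 0 < σ := by rw [hσ]; linarith
    have hσ1 : σ < 1 := by rw [hσ]; linarith
    set Q := Real.log (c*B) with hQ
    have hcB1 : 1 ≤ c*B := by
      have h := mul_le_mul hc hB1 zero_le_one (show (0:ℝ) ≤ c by linarith)
      linarith
    have hQ0 : 0 ≤ Q := Real.log_nonneg hcB1
    have hQeq : Q = Real.log c + t * L := by
      rw [hQ, Real.log_mul (by linarith) (by linarith), hlogB]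
    set M := Real.log (1/σ) with hM
    have hMeq : M = L - Real.log 2 := by
      rw [hM, hLdef, one_div, one_div, Real.log_inv, Real.log_inv, hσ,
        Real.log_mul (by norm_num) (ne_of_gt hν0)]
      ring
    have hlog2'' : Real.log 2 < 1 := by linarith [Real.log_two_lt_d9]
    have hM0 : 0 < M := by
      rw [hMeq]
      linarith [hL, hK1]
    have hLK : Real.log c + (t+ε)*Real.log 2 + ε/2 ≤ (ε/2) * L := by
      have h4 : (ε/2) * K ≤ (ε/2) * L := mul_le_mul_of_nonneg_left hL (by linarith)
      linarith [hKW]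
    have hQM : Q ≤ (t + ε/2) * M := by
      rw [hQeq, hMeq]
      have h5 : (t+ε/2)*Real.log 2 ≤ (t+ε)*Real.log 2 :=
        mul_le_mul_of_nonneg_right (by linarith) hlog2
      linarith [hLK, h5]
    obtain ⟨k₀', hk₀'⟩ := exists_nat_gt (Q/(M*(ε/2)))
    have hQk₀ : Q < k₀' * (M * (ε/2)) := by
      have hpos : 0 < M * (ε/2) := mul_pos hM0 (by linarith)
      exact (div_lt_iff₀ hpos).mp hk₀'
    set k₀ := k₀' + 1 with hk₀
    have inner : ∀ R : ℝ, 0 < R → R ≤ r₀ → R ≤ 1 →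
        limsup (fun s : ℝ =>
          ((Real.log (coverNum s (ball x R)) / Real.log (1 / s) : ℝ) : EReal)) (𝓝[>] (0:ℝ))
          ≤ ((t + ε : ℝ) : EReal) := by
      intro R hR hRr₀ hR1
      apply limsup_le_of_le (by isBoundedDefault)
      rw [ev_pos_iff]
      refine ⟨σ^k₀ * R, mul_pos (pow_pos hσ0 _) hR, ?_⟩
      intro s hs hss₁
      rw [EReal.coe_le_coe_iff]
      have hex2 : ∃ k, σ^k * R ≤ s := by
        obtain ⟨n, hn⟩ := exists_pow_lt_of_lt_one (div_pos hs hR) hσ1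
        refine ⟨n, ?_⟩
        rw [lt_div_iff₀ hR] at hn
        linarith
      set k := Nat.find hex2 with hk
      have hk1 : σ^k * R ≤ s := Nat.find_spec hex2
      have hkk₀ : k₀ + 1 ≤ k := by
        by_contra hcon2
        push_neg at hcon2
        have hkk : k ≤ k₀ := by omega
        have h1 : σ^k₀ ≤ σ^k := pow_le_pow_of_le_one (le_of_lt hσ0) (le_of_lt hσ1) hkk
        have : σ^k₀ * R ≤ σ^k * R := mul_le_mul_of_nonneg_right h1 (le_of_lt hR)
        linarith
      have hk2 : 2 ≤ k := by omega
      have hsk : s < σ^(k-1) * R := by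
        have h := Nat.find_min hex2 (show k - 1 < k by omega)
        push_neg at h
        exact h
      obtain ⟨F, hFcard, hFcov⟩ := hclaim k R hR hRr₀
      have hcov_s : ball x R ⊆ ⋃ y ∈ F, ball y s := by
        exact hFcov.trans (Set.iUnion₂_mono fun y _ => ball_subset_ball hk1)
      have hn1 : 1 ≤ coverNum s (ball x R) :=
        one_le_coverNum ⟨x, mem_ball_self hR⟩ ⟨F, hcov_s⟩
      have hn1' : (0:ℝ) < coverNum s (ball x R) := by exact_mod_cast hn1
      have hnF : (coverNum s (ball x R) : ℝ) ≤ (c*B)^k := by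
        have h1 : (coverNum s (ball x R) : ℝ) ≤ (F.card : ℝ) := by
          exact_mod_cast coverNum_le_card hcov_s
        linarith
      have hlogn : Real.log (coverNum s (ball x R)) ≤ k * Q := by
        calc Real.log (coverNum s (ball x R)) ≤ Real.log ((c*B)^k) :=
              (Real.log_le_log_iff hn1' (pow_pos (lt_of_lt_of_le one_pos hcB1) k)).mpr hnF
          _ = k * Q := by rw [Real.log_pow, hQ]
      have hlogs : ((k:ℝ)-1)*M ≤ Real.log (1/s) := by
        have h2 : σ^(k-1) * R ≤ σ^(k-1) :=
          mul_le_of_le_one_right (le_of_lt (pow_pos hσ0 _)) hR1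
        have h1 : s < σ^(k-1) := lt_of_lt_of_le hsk h2
        have h3 : Real.log s < Real.log (σ^(k-1)) := Real.log_lt_log hs h1
        rw [Real.log_pow] at h3
        have hcast : ((k-1 : ℕ):ℝ) = (k:ℝ) - 1 := by
          have h4 : 1 ≤ k := by omega
          push_cast [Nat.cast_sub h4]
          ring
        rw [hcast] at h3
        rw [one_div, Real.log_inv, hM, one_div, Real.log_inv]
        linarith [h3]
      have hlogs0 : 0 < ((k:ℝ)-1)*M := by
        have h5 : (2:ℝ) ≤ (k:ℝ) := by exact_mod_cast hk2
        exact mul_pos (by linarith) hM0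
      have hdiv : Real.log (coverNum s (ball x R)) / Real.log (1/s)
          ≤ ((k:ℝ) * Q) / (((k:ℝ)-1)*M) := by
        apply div_le_div₀ (mul_nonneg (Nat.cast_nonneg _) hQ0) hlogn hlogs0 hlogs
      have hfinal : ((k:ℝ) * Q) / (((k:ℝ)-1)*M) ≤ t + ε := by
        rw [div_le_iff₀ hlogs0]
        have hkR : (2:ℝ) ≤ (k:ℝ) := by exact_mod_cast hk2
        have hk10 : (0:ℝ) ≤ (k:ℝ) - 1 := by linarith
        have h1 : ((k:ℝ)-1) * Q ≤ ((k:ℝ)-1) * ((t + ε/2) * M) :=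
          mul_le_mul_of_nonneg_left hQM hk10
        have h2 : Q ≤ ((k:ℝ)-1)*M*(ε/2) := by
          have hkk' : (k₀' : ℝ) ≤ (k:ℝ) - 1 := by
            have h6 : k₀' + 2 ≤ k := by omega
            have hcast : (k₀' : ℝ) + 2 ≤ (k:ℝ) := by exact_mod_cast h6
            linarith
          have hMε : 0 ≤ M * (ε/2) := mul_nonneg hM0.le (by linarith)
          have hmm := mul_le_mul_of_nonneg_right hkk' hMε
          linarith [hQk₀, hmm]
        linarith [h1, h2]
      linarith
    apply limsup_le_of_le (by isBoundedDefault)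
    rw [ev_pos_iff]
    refine ⟨min r₀ 1, lt_min hr₀0 one_pos, ?_⟩
    intro R hR0 hRlt
    exact inner R hR0 (le_of_lt (lt_of_lt_of_le hRlt (min_le_left _ _)))
      (le_of_lt (lt_of_lt_of_le hRlt (min_le_right _ _)))
  have hfinal := ereal_le_add_eps key
  exact absurd ht2 (not_lt.mpr hfinal)


set_option maxHeartbeats 1000000 in
lemma lower_main (x : X) {c a : ℝ}
    (hfin : ∀ l > (0 : ℝ), ∃ C : ℕ, ∀ᶠ r in 𝓝[>] (0 : ℝ),
      ∃ F : Finset X, F.card ≤ C ∧ closedBall x r ⊆ ⋃ y ∈ F, ball y (l * r))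
    (hc : 1 ≤ c) (ha : 0 < a) (ha1 : a ≤ 1)
    (hhom : ∀ r : ℝ, 0 < r → r ≤ a → ∀ l m : ℝ, 0 < l → l ≤ 1 → 0 < m → m ≤ 1 →
      ∀ y ∈ ball x r, ∀ z ∈ ball x r,
        (coverNum (l * m * r) (ball y (l * r)) : ℝ) ≤
          c * (coverNum (l * m * r) (ball z (l * r)) : ℝ)) :
    lowerTD x ≤ lowerLocalBoxDim x := by
  classical
  by_contra hcon
  push_neg at hcon
  obtain ⟨t, ht1, ht2⟩ := EReal.exists_between_coe_real hcon
  have ht0 : 0 < t := by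
    have h := lt_of_le_of_lt (lowerBox_nonneg x) ht1
    exact_mod_cast h
  have hc0 : (0:ℝ) < c := lt_of_lt_of_le one_pos hc
  have hlogc : 0 ≤ Real.log c := Real.log_nonneg hc
  have hlog8 : 0 ≤ Real.log 8 := Real.log_nonneg (by norm_num)
  -- total boundedness near x
  obtain ⟨C₄, hC₄⟩ := hfin (1/4) (by norm_num)
  rw [ev_pos_iff] at hC₄
  obtain ⟨ρ₄, hρ₄, hCov₄⟩ := hC₄
  set r₁ := min (ρ₄/2) a with hr₁
  have hr₁0 : 0 < r₁ := lt_min (by linarith) ha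
  have hr₁a : r₁ ≤ a := min_le_right _ _
  have hr₁ρ : r₁ ≤ ρ₄/2 := min_le_left _ _
  clear_value r₁
  have H4 : ∀ r : ℝ, 0 < r → r ≤ r₁ →
      ∃ F : Finset X, (F.card : ℝ) ≤ max (C₄:ℝ) 1 ∧ ball x r ⊆ ⋃ y ∈ F, ball y ((1/4) * r) := by
    intro r hr hrr
    obtain ⟨F, hFcard, hFcov⟩ := hCov₄ r hr (by linarith)
    refine ⟨F, ?_, ball_subset_closedBall.trans hFcov⟩
    calc (F.card : ℝ) ≤ (C₄ : ℝ) := by exact_mod_cast hFcard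
      _ ≤ max (C₄:ℝ) 1 := le_max_left _ _
  have hclaim4 := claim_iter x hc ha hhom (show (0:ℝ) < 1/4 by norm_num)
    (by norm_num) hr₁0 hr₁a (le_max_right _ _) H4
  have TB : ∀ R : ℝ, 0 < R → R ≤ r₁ → ∀ s : ℝ, 0 < s →
      ∃ F : Finset X, ball x R ⊆ ⋃ y ∈ F, ball y s := by
    intro R hR hRr₁ s hs
    obtain ⟨n, hn⟩ := exists_pow_lt_of_lt_one (div_pos hs hR)
      (show (2*(1/4:ℝ)) < 1 by norm_num)
    obtain ⟨F, _, hFcov⟩ := hclaim4 n R hR hRr₁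
    refine ⟨F, hFcov.trans (Set.iUnion₂_mono fun y _ => ball_subset_ball ?_)⟩
    rw [lt_div_iff₀ hR] at hn
    linarith
  have key : ∀ ε : ℝ, 0 < ε → ((t - ε : ℝ) : EReal) ≤ lowerLocalBoxDim x := by
    intro ε hε
    rcases le_or_gt (t - ε) 0 with hneg | hpos
    · refine le_trans ?_ (lowerBox_nonneg x)
      exact_mod_cast EReal.coe_le_coe_iff.mpr hneg
    · have hev1 := eventually_lt_of_lt_liminf ht2
      rw [ev_pos_iff] at hev1
      obtain ⟨lam₁, hlam₁, hH⟩ := hev1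
      set K := (t * Real.log 8 + Real.log c)/(ε/2) + 1 with hK
      have hW : 0 ≤ t * Real.log 8 + Real.log c := by
        have := mul_nonneg ht0.le hlog8
        linarith
      have hK1 : 1 ≤ K := by
        rw [hK]
        have := div_nonneg hW (show (0:ℝ) ≤ ε/2 by linarith)
        linarith
      have hKW : (ε/2) * K = t * Real.log 8 + Real.log c + (ε/2) := by
        rw [hK, mul_add, mul_one, mul_div_cancel₀ _ (show (ε/2) ≠ 0 by positivity)]
      clear_value K
      set ν := min (min (lam₁/16) (1/16)) (Real.exp (-K)) with hν
      have hν0 : 0 < ν := by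
        rw [hν]
        exact lt_min (lt_min (by linarith) (by norm_num)) (Real.exp_pos _)
      have hν16 : ν ≤ 1/16 := le_trans (min_le_left _ _) (min_le_right _ _)
      have hnulam : ν ≤ lam₁/16 := le_trans (min_le_left _ _) (min_le_left _ _)
      have hνK : ν ≤ Real.exp (-K) := min_le_right _ _
      clear_value ν
      have hν1 : ν < 1 := by linarith
      set L := Real.log (1/ν) with hLdef
      have hLν : Real.log ν = -L := by
        rw [hLdef, one_div, Real.log_inv]; ring
      have hL : K ≤ L := by
        have h2 : Real.log ν ≤ -K := by
          calc Real.log ν ≤ Real.log (Real.exp (-K)) :=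
                (Real.log_le_log_iff hν0 (Real.exp_pos _)).mpr hνK
            _ = -K := Real.log_exp _
        rw [hLdef, one_div, Real.log_inv]
        linarith
      have hL0 : 0 < L := lt_of_lt_of_le (by linarith) hL
      clear_value L
      set lam := 8*ν with hlam
      have hlam0 : 0 < lam := by rw [hlam]; linarith
      have hlam1 : lam ≤ 1/2 := by rw [hlam]; linarith
      have hlamlam₁ : lam < lam₁ := by rw [hlam]; linarith
      have hloglam : Real.log (1/lam) = L - Real.log 8 := by
        rw [hlam, one_div, Real.log_inv, Real.log_mul (by norm_num) (ne_of_gt hν0), hLν]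
        ring
      have hloglam0 : 0 < Real.log (1/lam) := by
        apply Real.log_pos
        rw [one_div]
        rw [one_lt_inv_iff₀]
        exact ⟨hlam0, by linarith⟩
      clear_value lam
      have hHlam := hH lam hlam0 hlamlam₁
      have hev2 := eventually_lt_of_lt_liminf hHlam
      rw [ev_pos_iff] at hev2
      obtain ⟨r₂, hr₂, hNlow⟩ := hev2
      set P := Real.exp (t * Real.log (1/lam)) with hP
      have hPpos : 0 < P := Real.exp_pos _
      have hlogP : Real.log P = t * Real.log (1/lam) := by rw [hP, Real.log_exp]
      clear_value P
      set A := t * Real.log (1/lam) - Real.log c with hA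
      have hlogPc : Real.log (P/c) = A := by
        rw [Real.log_div (ne_of_gt hPpos) (ne_of_gt hc0), hlogP, hA]
      have hA2 : (t - ε/2)*L ≤ A := by
        rw [hA, hloglam]
        have h4 : (ε/2) * K ≤ (ε/2) * L := mul_le_mul_of_nonneg_left hL (by linarith)
        linarith [hKW, h4]
      have hA0 : 0 < A :=
        lt_of_lt_of_le (mul_pos (show 0 < t - ε/2 by linarith) hL0) hA2
      clear_value A
      have hNbound : ∀ r : ℝ, 0 < r → r < r₂ → P ≤ (coverNum (lam*r) (ball x r) : ℝ) := by
        intro r hr hrr₂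
        have h := hNlow r hr hrr₂
        have h' : t < Real.log (coverNum (lam*r) (ball x r)) / Real.log (1/lam) := by
          exact_mod_cast h
        have hlt : t * Real.log (1/lam) < Real.log (coverNum (lam*r) (ball x r)) :=
          (lt_div_iff₀ hloglam0).mp h'
        rcases Nat.eq_zero_or_pos (coverNum (lam*r) (ball x r)) with h0 | hposn
        · exfalso
          rw [h0] at hlt
          simp only [Nat.cast_zero, Real.log_zero] at hlt
          linarith [mul_pos ht0 hloglam0]
        · have hn0 : (0:ℝ) < (coverNum (lam*r) (ball x r) : ℝ) := by exact_mod_cast hposn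
          calc P ≤ Real.exp (Real.log (coverNum (lam*r) (ball x r))) := by
                rw [hP]; exact Real.exp_le_exp.mpr hlt.le
            _ = _ := Real.exp_log hn0
      set R₁ := min (min r₁ (4*r₂)) (min a 1) with hR₁
      have hR₁0 : 0 < R₁ := lt_min (lt_min hr₁0 (by linarith)) (lt_min ha one_pos)
      have hR₁r₁ : R₁ ≤ r₁ := le_trans (min_le_left _ _) (min_le_left _ _)
      have hR₁r₂ : R₁ ≤ 4*r₂ := le_trans (min_le_left _ _) (min_le_right _ _)
      have hR₁a : R₁ ≤ a := le_trans (min_le_right _ _) (min_le_left _ _)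
      have hR₁1 : R₁ ≤ 1 := le_trans (min_le_right _ _) (min_le_right _ _)
      clear_value R₁
      -- iteration
      have iter : ∀ k : ℕ, ∀ R : ℝ, 0 < R → R ≤ R₁ →
          (P/c)^k ≤ (coverNum (ν^k * R) (ball x R) : ℝ) := by
        intro k
        induction k with
        | zero =>
          intro R hR hRR₁
          rw [pow_zero, pow_zero, one_mul]
          exact_mod_cast one_le_coverNum ⟨x, mem_ball_self hR⟩
            (TB R hR (le_trans hRR₁ hR₁r₁) R hR)
        | succ k IH =>
          intro R hR hRR₁
          have hl0 : (0:ℝ) < ν^k/2 := by positivity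
          have hl1 : ν^k/2 ≤ 1 := by
            have := pow_le_one₀ hν0.le hν1.le (n := k)
            linarith
          have hμ0 : (0:ℝ) < 2*ν := by linarith
          have hμ4 : 2*ν ≤ 1/4 := by linarith
          have hex : ∃ F : Finset X, ball x R ⊆ ⋃ y ∈ F, ball y ((2*ν)*(ν^k/2)*R) :=
            TB R hR (le_trans hRR₁ hR₁r₁) _ (by positivity)
          have hpack := pack x hc hhom (R := R) (l := ν^k/2) (μ := 2*ν)
            hR (le_trans hRR₁ hR₁a) hl0 hl1 hμ0 hμ4 hex
          have e1 : (2*ν)*(ν^k/2)*R = ν^(k+1)*R := by ring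
          have e2 : (ν^k/2)*R = ν^k*(R/2) := by ring
          have e3 : (ν^k/2)*R/4 = ν^k*R/8 := by ring
          rw [e1, e3, e2] at hpack
          have hIH := IH (R/2) (by linarith) (by linarith)
          have hNb : P ≤ (coverNum (ν^(k+1)*R) (ball x (ν^k*R/8)) : ℝ) := by
            have hr' : 0 < ν^k*R/8 := by positivity
            have hr'' : ν^k*R/8 < r₂ := by
              have h5 : ν^k ≤ 1 := pow_le_one₀ hν0.le hν1.le
              have h6 : ν^k*R ≤ R := mul_le_of_le_one_left hR.le h5
              linarith [hR₁r₂, hRR₁]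
            have h := hNbound _ hr' hr''
            have e4 : lam*(ν^k*R/8) = ν^(k+1)*R := by rw [hlam]; ring
            rwa [e4] at h
          have hXnn : (0:ℝ) ≤ (coverNum (ν^k*(R/2)) (ball x (R/2)) : ℝ) := Nat.cast_nonneg _
          have hchain : (P/c)^k * P ≤ c * (coverNum (ν^(k+1)*R) (ball x R) : ℝ) := by
            calc (P/c)^k * P
                ≤ (coverNum (ν^k*(R/2)) (ball x (R/2)) : ℝ) *
                  (coverNum (ν^(k+1)*R) (ball x (ν^k*R/8)) : ℝ) :=
                  mul_le_mul hIH hNb hPpos.le hXnn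
              _ ≤ c * (coverNum (ν^(k+1)*R) (ball x R) : ℝ) := hpack
          rw [← mul_le_mul_iff_of_pos_right hc0]
          have h6 : (P/c)^(k+1) * c = (P/c)^k * P := by
            rw [pow_succ, mul_assoc, div_mul_cancel₀ P hc0.ne']
          rw [h6]
          linarith
      -- inner estimate
      have inner : ∀ R : ℝ, 0 < R → R ≤ R₁ →
          ((t - ε : ℝ) : EReal) ≤ liminf (fun s : ℝ =>
            ((Real.log (coverNum s (ball x R)) / Real.log (1 / s) : ℝ) : EReal)) (𝓝[>] (0:ℝ)) := by
        intro R hR hRR₁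
        set CR := Real.log (1/R) with hCR
        have hCR0 : 0 ≤ CR := by
          rw [hCR]
          apply Real.log_nonneg
          rw [le_div_iff₀ hR]
          linarith [hRR₁, hR₁1]
        have hCRR : Real.log R = -CR := by
          rw [hCR, one_div, Real.log_inv]; ring
        clear_value CR
        obtain ⟨k₀', hk₀'⟩ := exists_nat_gt ((A + t*CR)/((ε/2)*L))
        have hbig : A + t*CR < (k₀' : ℝ) * ((ε/2)*L) := by
          have hpos2 : 0 < (ε/2)*L := mul_pos (by linarith) hL0
          exact (div_lt_iff₀ hpos2).mp hk₀'
        apply le_liminf_of_le (by isBoundedDefault)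
        rw [ev_pos_iff]
        refine ⟨ν^(k₀'+1) * R, mul_pos (pow_pos hν0 _) hR, ?_⟩
        intro s hs hss₂
        rw [EReal.coe_le_coe_iff]
        have hexk : ∃ k, ν^k * R ≤ s := by
          obtain ⟨n, hn⟩ := exists_pow_lt_of_lt_one (div_pos hs hR) hν1
          refine ⟨n, ?_⟩
          rw [lt_div_iff₀ hR] at hn
          linarith
        set k := Nat.find hexk with hkdef
        have hk1 : ν^k * R ≤ s := Nat.find_spec hexk
        have hkk₀ : k₀' + 2 ≤ k := by
          by_contra hcon2
          push_neg at hcon2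
          have hkk : k ≤ k₀' + 1 := by omega
          have h1 : ν^(k₀'+1) ≤ ν^k := pow_le_pow_of_le_one hν0.le hν1.le hkk
          have h2 : ν^(k₀'+1) * R ≤ ν^k * R := mul_le_mul_of_nonneg_right h1 hR.le
          linarith
        have hsk : s < ν^(k-1) * R := by
          have h := Nat.find_min hexk (show k - 1 < k by omega)
          push_neg at h
          exact h
        -- numerator
        have hiter := iter (k-1) R hR hRR₁
        have hPc0 : (0:ℝ) < (P/c)^(k-1) := pow_pos (div_pos hPpos hc0) _
        have hmono : (coverNum (ν^(k-1)*R) (ball x R) : ℝ) ≤ (coverNum s (ball x R) : ℝ) := by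
          exact_mod_cast coverNum_mono_radius hsk.le
            (TB R hR (le_trans hRR₁ hR₁r₁) s hs)
        have hns0 : (0:ℝ) < (coverNum s (ball x R) : ℝ) :=
          lt_of_lt_of_le hPc0 (le_trans hiter hmono)
        have hcast1 : ((k-1 : ℕ):ℝ) = (k:ℝ) - 1 := by
          have h4 : 1 ≤ k := by omega
          push_cast [Nat.cast_sub h4]
          ring
        have hnum : ((k:ℝ)-1)*A ≤ Real.log (coverNum s (ball x R)) := by
          have h7 : Real.log ((P/c)^(k-1)) ≤ Real.log (coverNum s (ball x R)) :=
            (Real.log_le_log_iff hPc0 hns0).mpr (le_trans hiter hmono)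
          rw [Real.log_pow, hlogPc, hcast1] at h7
          exact h7
        -- denominator
        have hden0 : 0 < Real.log (1/s) := by
          apply Real.log_pos
          rw [one_div, one_lt_inv_iff₀]
          refine ⟨hs, ?_⟩
          have h8 : ν^(k₀'+1) < 1 := pow_lt_one₀ hν0.le hν1 (by omega)
          have h8' : ν^(k₀'+1) * R ≤ ν^(k₀'+1) :=
            mul_le_of_le_one_right (pow_pos hν0 _).le (by linarith [hRR₁, hR₁1])
          linarith
        have hden : Real.log (1/s) ≤ (k:ℝ)*L + CR := by
          have h9 : Real.log (ν^k * R) ≤ Real.log s :=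
            (Real.log_le_log_iff (by positivity) hs).mpr hk1
          rw [Real.log_mul (by positivity) (ne_of_gt hR), Real.log_pow, hLν, hCRR] at h9
          rw [one_div, Real.log_inv]
          linarith [h9]
        have hkpos : 0 < (k:ℝ)*L + CR := by
          have h10 : (1:ℝ) ≤ (k:ℝ) := by
            have : 1 ≤ k := by omega
            exact_mod_cast this
          have h11 : (1:ℝ)*L ≤ (k:ℝ)*L := mul_le_mul_of_nonneg_right h10 hL0.le
          linarith
        -- cross inequality
        have h1 : (t - ε)*((k:ℝ)*L + CR) ≤ ((k:ℝ)-1)*A := by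
          have hkc : (k₀' : ℝ) ≤ (k:ℝ) := by
            have : k₀' ≤ k := by omega
            exact_mod_cast this
          have hu : (k:ℝ)*((t-ε/2)*L) ≤ (k:ℝ)*A :=
            mul_le_mul_of_nonneg_left hA2 (by positivity)
          have hv : (k₀':ℝ)*((ε/2)*L) ≤ (k:ℝ)*((ε/2)*L) :=
            mul_le_mul_of_nonneg_right hkc (by positivity)
          have hw : 0 ≤ ε*CR := mul_nonneg hε.le hCR0
          linarith [hbig, hu, hv, hw]
        calc (t - ε : ℝ) ≤ (((k:ℝ)-1)*A)/((k:ℝ)*L + CR) := (le_div_iff₀ hkpos).mpr h1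
          _ ≤ Real.log (coverNum s (ball x R)) / Real.log (1/s) :=
              div_le_div₀ (log_nat_nonneg _) hnum hden0 hden
      apply le_liminf_of_le (by isBoundedDefault)
      rw [ev_pos_iff]
      exact ⟨R₁, hR₁0, fun R hR0 hRlt => inner R hR0 hRlt.le⟩
  have hfinal := ereal_sub_eps_le key
  exact absurd ht1 (not_lt.mpr hfinal)

end helpers

theorem stmt19 {X : Type*} [MetricSpace X] (x : X)
    -- condition: `limsup_{r→0} n(λ r, B̄(x,r)) < ∞` for all `λ > 0`
    (hfin : ∀ l > (0 : ℝ), ∃ C : ℕ, ∀ᶠ r in 𝓝[>] (0 : ℝ),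
      ∃ F : Finset X, F.card ≤ C ∧ closedBall x r ⊆ ⋃ y ∈ F, ball y (l * r))
    -- doubling-type homogeneity assumption
    (c : ℝ) (hc : 1 ≤ c) (a : ℝ) (ha : 0 < a) (ha1 : a ≤ 1)
    (hhom : ∀ r : ℝ, 0 < r → r ≤ a → ∀ l m : ℝ, 0 < l → l ≤ 1 → 0 < m → m ≤ 1 →
      ∀ y ∈ ball x r, ∀ z ∈ ball x r,
        (coverNum (l * m * r) (ball y (l * r)) : ℝ) ≤
          c * (coverNum (l * m * r) (ball z (l * r)) : ℝ)) :
    lowerTD x ≤ lowerLocalBoxDim x ∧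
      lowerLocalBoxDim x ≤ upperLocalBoxDim x ∧
        upperLocalBoxDim x ≤ upperTD x := by
  exact ⟨lower_main x hfin hc ha ha1 hhom, middle_ineq x,
    upper_main x hfin hc ha ha1 hhom⟩
end
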